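/- arXiv:1403.2340 — 8 statements merged into one kernel-verified Lean document; each statement's English description precedes it below -/
import Mathlib

section
/- There is a constant C depending only on the dimension d with the following property. Let X be a bounded open convex subset of ℝ^d, let ε > 0, let U_ε ⊆ ∂X be a boundary ε-sample with associated discretized constraint set M_ε, and let γ > 0. Then the directed Hausdorff distance satisfies d_H(B_Lip^γ ∩ H_{M_ε} | B_Lip^γ ∩ H) ≤ C γ ε; that is, for every γ-Lipschitz g ∈ C(X) with ℓ(g) ≤ 0 for all ℓ ∈ M_ε, there exists a convex γ-Lipschitz function f on X with ‖g − f‖_∞ ≤ C γ ε. -/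
open Set NNReal

noncomputable section

abbrev Esp (d : ℕ) := EuclideanSpace ℝ (Fin d)

/-- The value of the affine form `ℓ_{xyz}` on a function `g`: with `λ = ‖z−y‖/‖x−y‖`,
`ℓ_{xyz}(g) = g(z) − λ g(x) − (1−λ) g(y)`. -/
def ellVal {d : ℕ} (g : Esp d → ℝ) (x y z : Esp d) : ℝ :=
  g z - (‖z - y‖ / ‖x - y‖) * g x - (1 - ‖z - y‖ / ‖x - y‖) * g y

/-- The discrete segment `c_{pq} = {p + εi(q−p)/‖q−p‖ : i ∈ ℕ, 0 ≤ i ≤ ‖q−p‖/ε}`. -/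
def discreteSeg {d : ℕ} (ε : ℝ) (p q : Esp d) : Set (Esp d) :=
  {x | ∃ i : ℕ, (i : ℝ) ≤ ‖q - p‖ / ε ∧ x = p + ((ε * i) / ‖q - p‖) • (q - p)}

/-- `U` is an `ε`-sample of the boundary of `X`: `U ⊆ ∂X` and every point of `∂X` is within
distance `ε` of a point of `U`. -/
def IsBoundarySample {d : ℕ} (X : Set (Esp d)) (ε : ℝ) (U : Set (Esp d)) : Prop :=
  U ⊆ frontier X ∧ ∀ x ∈ frontier X, ∃ u ∈ U, ‖x - u‖ ≤ ε

/-- The data `(x, y, z)` defines a form `ℓ_{xyz}` of the discretized constraint set `M_ε`: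
`x, y, z ∈ c_{pq}` for some distinct `p, q ∈ U` and `z ∈ [x,y]`. -/
def MemMeps {d : ℕ} (ε : ℝ) (U : Set (Esp d)) (x y z : Esp d) : Prop :=
  ∃ p ∈ U, ∃ q ∈ U, p ≠ q ∧ x ∈ discreteSeg ε p q ∧ y ∈ discreteSeg ε p q ∧
    z ∈ discreteSeg ε p q ∧ x ≠ y ∧ z ∈ segment ℝ x y

/-- `g` belongs to `H_{M_ε}`, i.e. `ℓ(g) ≤ 0` for every form `ℓ ∈ M_ε`. -/
def SatisfiesMeps {d : ℕ} (ε : ℝ) (U : Set (Esp d)) (g : Esp d → ℝ) : Prop :=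
  ∀ x y z : Esp d, MemMeps ε U x y z → ellVal g x y z ≤ 0

lemma exists_frontier_ray {d : ℕ} {X : Set (Esp d)} (hXo : IsOpen X)
    (hXb : Bornology.IsBounded X) {c v : Esp d} (hc : c ∈ closure X) (hv : v ≠ 0) :
    ∃ t : ℝ, 0 ≤ t ∧ c + t • v ∈ frontier X := by
  obtain ⟨R, hR⟩ := isBounded_iff_forall_norm_le.mp hXb.closure
  set S : Set ℝ := Ici 0 ∩ (fun t : ℝ => c + t • v) ⁻¹' closure X with hS
  have hSne : S.Nonempty := ⟨0, Set.mem_Ici.mpr le_rfl, by simpa using hc⟩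
  have hvpos : 0 < ‖v‖ := norm_pos_iff.mpr hv
  have hSbdd : BddAbove S := by
    refine ⟨(R + ‖c‖) / ‖v‖, fun t ht => ?_⟩
    obtain ⟨ht0, htX⟩ := ht
    have ht0' : (0:ℝ) ≤ t := ht0
    have h1 : ‖c + t • v‖ ≤ R := hR _ htX
    have h2 : t * ‖v‖ = ‖t • v‖ := by
      rw [norm_smul, Real.norm_eq_abs, abs_of_nonneg ht0']
    have h3 : ‖t • v‖ ≤ ‖c + t • v‖ + ‖c‖ := by
      calc ‖t • v‖ = ‖(c + t • v) - c‖ := by rw [add_sub_cancel_left]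
      _ ≤ ‖c + t • v‖ + ‖c‖ := norm_sub_le _ _
    rw [le_div_iff₀ hvpos]
    linarith
  have hScl : IsClosed S := by
    apply isClosed_Ici.inter
    exact isClosed_closure.preimage (by continuity)
  have htS := hScl.csSup_mem hSne hSbdd
  obtain ⟨hT0, hTX⟩ := htS
  refine ⟨sSup S, hT0, ?_⟩
  rw [hXo.frontier_eq]
  refine ⟨hTX, fun hmem => ?_⟩
  obtain ⟨η, hη, hball⟩ := Metric.isOpen_iff.mp hXo _ hmem
  have hd : (0:ℝ) < η / (2 * ‖v‖) := by positivity
  have hmem' : c + (sSup S + η / (2 * ‖v‖)) • v ∈ X := by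
    apply hball
    rw [Metric.mem_ball, dist_eq_norm]
    have heq : c + (sSup S + η / (2 * ‖v‖)) • v - (c + sSup S • v)
        = (η / (2 * ‖v‖)) • v := by
      rw [add_smul]; abel
    rw [heq, norm_smul, Real.norm_eq_abs, abs_of_pos hd]
    have : η / (2 * ‖v‖) * ‖v‖ = η / 2 := by
      field_simp
    rw [this]; linarith
  have hmemS : sSup S + η / (2 * ‖v‖) ∈ S := ⟨by simp only [Set.mem_Ici] at hT0 ⊢; linarith, subset_closure hmem'⟩
  have hle : sSup S + η / (2 * ‖v‖) ≤ sSup S := le_csSup hSbdd hmemS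
  linarith

lemma lip_diff {d : ℕ} {X : Set (Esp d)} {γ : ℝ} (hγ : 0 ≤ γ) {g : Esp d → ℝ}
    (hg : LipschitzOnWith (Real.toNNReal γ) g (closure X))
    {u w : Esp d} (hu : u ∈ closure X) (hw : w ∈ closure X) :
    |g u - g w| ≤ γ * ‖u - w‖ := by
  have h := hg.dist_le_mul u hu w hw
  rw [Real.dist_eq, dist_eq_norm] at h
  rwa [Real.coe_toNNReal γ hγ] at h

/-- n-point approximate Jensen from 2-point approximate convexity. -/
lemma npoint {d : ℕ} {D : Set (Esp d)} (hD : Convex ℝ D) {g : Esp d → ℝ} {δ : ℝ}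
    (hδ : 0 ≤ δ)
    (hA : ∀ x ∈ D, ∀ y ∈ D, ∀ a b : ℝ, 0 ≤ a → 0 ≤ b → a + b = 1 →
      g (a • x + b • y) ≤ a * g x + b * g y + δ) :
    ∀ (t : Finset (Esp d × ℝ)) (w : Esp d × ℝ → ℝ), (∀ i ∈ t, 0 ≤ w i) →
      ∑ i ∈ t, w i = 1 → (∀ i ∈ t, i.1 ∈ D) →
      g (∑ i ∈ t, w i • i.1) ≤ (∑ i ∈ t, w i * g i.1) + ((t.card : ℝ) - 1) * δ := by
  intro t
  classical
  induction t using Finset.induction_on with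
  | empty => intro w _ hsum _; simp at hsum
  | @insert i s hni ih =>
    intro w hw0 hsum hmem
    rw [Finset.sum_insert hni] at hsum ⊢
    rw [Finset.sum_insert hni]
    have hcard : (insert i s).card = s.card + 1 := Finset.card_insert_of_notMem hni
    have hwi0 : 0 ≤ w i := hw0 i (Finset.mem_insert_self i s)
    have hws0 : ∀ j ∈ s, 0 ≤ w j := fun j hj => hw0 j (Finset.mem_insert_of_mem hj)
    have hc0 : 0 ≤ ∑ j ∈ s, w j := Finset.sum_nonneg hws0
    rcases eq_or_lt_of_le hc0 with hc | hc
    · -- all weights in s are zero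
      have hzero : ∀ j ∈ s, w j = 0 :=
        (Finset.sum_eq_zero_iff_of_nonneg hws0).mp hc.symm
      have h1 : w i = 1 := by
        have : ∑ j ∈ s, w j = 0 := hc.symm
        linarith
      have hsz : ∑ j ∈ s, w j • j.1 = 0 :=
        Finset.sum_eq_zero fun j hj => by rw [hzero j hj, zero_smul]
      have hsz2 : ∑ j ∈ s, w j * g j.1 = 0 :=
        Finset.sum_eq_zero fun j hj => by rw [hzero j hj, zero_mul]
      rw [hsz, hsz2, h1, one_smul, add_zero, one_mul]
      have : (0:ℝ) ≤ ((insert i s).card : ℝ) - 1 := by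
        rw [hcard]; push_cast; linarith
      nlinarith
    · -- positive remaining mass
      set c : ℝ := ∑ j ∈ s, w j with hcdef
      have hsne : s.Nonempty := by
        rcases Finset.eq_empty_or_nonempty s with h | h
        · subst h; simp at hcdef; rw [hcdef] at hc; exact absurd hc (lt_irrefl 0)
        · exact h
      have hcne : c ≠ 0 := ne_of_gt hc
      have hwi1 : w i + c = 1 := hsum
      have hc1 : c ≤ 1 := by linarith
      set q : Esp d := ∑ j ∈ s, (w j / c) • j.1 with hqdef
      have hq : q ∈ D := by
        apply hD.sum_mem (fun j hj => div_nonneg (hws0 j hj) hc0)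
        · rw [← Finset.sum_div, div_self hcne]
        · exact fun j hj => hmem j (Finset.mem_insert_of_mem hj)
      have hIH := ih (fun j => w j / c) (fun j hj => div_nonneg (hws0 j hj) hc0)
        (by rw [← Finset.sum_div, div_self hcne])
        (fun j hj => hmem j (Finset.mem_insert_of_mem hj))
      have hsplit : w i • i.1 + ∑ j ∈ s, w j • j.1 = w i • i.1 + c • q := by
        congr 1
        rw [hqdef, Finset.smul_sum]
        apply Finset.sum_congr rfl
        intro j hj
        rw [smul_smul, mul_div_cancel₀ _ hcne]
      rw [hsplit]
      have hstep := hA i.1 (hmem i (Finset.mem_insert_self i s)) q hq (w i) c hwi0 hc0 hwi1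
      have hmul : c * (∑ j ∈ s, (w j / c) * g j.1) = ∑ j ∈ s, w j * g j.1 := by
        rw [Finset.mul_sum]
        apply Finset.sum_congr rfl
        intro j hj
        field_simp
      have hcard1 : (1:ℝ) ≤ (s.card : ℝ) := by
        have := Finset.card_pos.mpr hsne
        exact_mod_cast this
      calc g (w i • i.1 + c • q) ≤ w i * g i.1 + c * g q + δ := hstep
      _ ≤ w i * g i.1 + c * ((∑ j ∈ s, (w j / c) * g j.1) + ((s.card : ℝ) - 1) * δ) + δ := by
          nlinarith [hIH]
      _ = w i * g i.1 + (∑ j ∈ s, w j * g j.1) + (c * ((s.card : ℝ) - 1) * δ + δ) := by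
          rw [mul_add, hmul]; ring
      _ ≤ w i * g i.1 + (∑ j ∈ s, w j * g j.1) + (((insert i s).card : ℝ) - 1) * δ := by
          rw [hcard]; push_cast
          nlinarith [mul_nonneg (mul_nonneg (sub_nonneg.mpr hc1) (sub_nonneg.mpr hcard1)) hδ]
      _ = w i * g i.1 + ∑ j ∈ s, w j * g j.1 + ((insert i s).card - 1) * δ := by norm_num


lemma finrank_esp_prod (d : ℕ) : Module.finrank ℝ (Esp d × ℝ) = d + 1 := by
  rw [Module.finrank_prod, finrank_euclideanSpace_fin, Module.finrank_self]

set_option maxHeartbeats 800000 in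
/-- Every point of the convex hull of the graph of `g` over `D` lies above `g` minus `(d+1)δ`. -/
lemma hull_bound {d : ℕ} {D : Set (Esp d)} (hD : Convex ℝ D) {g : Esp d → ℝ} {δ : ℝ}
    (hδ : 0 ≤ δ)
    (hA : ∀ x ∈ D, ∀ y ∈ D, ∀ a b : ℝ, 0 ≤ a → 0 ≤ b → a + b = 1 →
      g (a • x + b • y) ≤ a * g x + b * g y + δ)
    {wr : Esp d × ℝ} (hwr : wr ∈ convexHull ℝ ((fun w => (w, g w)) '' D)) :
    wr.1 ∈ D ∧ g wr.1 ≤ wr.2 + ((d : ℝ) + 1) * δ := by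
  classical
  rw [convexHull_eq_union] at hwr
  simp only [Set.mem_iUnion] at hwr
  obtain ⟨t, hts, hai, hmem⟩ := hwr
  rw [Finset.convexHull_eq] at hmem
  obtain ⟨w, hw0, hw1, hcm⟩ := hmem
  rw [Finset.centerMass_eq_of_sum_1 _ _ hw1] at hcm
  -- each element of t is on the graph
  have hgraph : ∀ y ∈ t, y.1 ∈ D ∧ y.2 = g y.1 := by
    intro y hy
    obtain ⟨u, hu, huy⟩ := hts hy
    constructor
    · rw [← huy]; exact hu
    · rw [← huy]
  -- components of the sum
  have hfst : wr.1 = ∑ y ∈ t, w y • y.1 := by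
    rw [← hcm]
    simp [Prod.fst_sum]
  have hsnd : wr.2 = ∑ y ∈ t, w y * g y.1 := by
    rw [← hcm]
    rw [Prod.snd_sum]
    apply Finset.sum_congr rfl
    intro y hy
    simp [smul_eq_mul, (hgraph y hy).2]
  -- cardinality bound
  have hcard : (t.card : ℝ) ≤ (d : ℝ) + 2 := by
    have h1 := hai.card_le_finrank_succ
    rw [Fintype.card_coe] at h1
    have h2 : Module.finrank ℝ (vectorSpan ℝ (Set.range ((↑) : t → Esp d × ℝ))) ≤
        Module.finrank ℝ (Esp d × ℝ) := Submodule.finrank_le _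
    rw [finrank_esp_prod] at h2
    have : t.card ≤ d + 2 := by omega
    exact_mod_cast this
  have hpt := npoint hD hδ hA t w hw0 hw1 (fun y hy => (hgraph y hy).1)
  constructor
  · rw [hfst]
    exact hD.sum_mem hw0 hw1 (fun y hy => (hgraph y hy).1)
  · rw [hfst, hsnd]
    calc g (∑ y ∈ t, w y • y.1) ≤ (∑ y ∈ t, w y * g y.1) + ((t.card : ℝ) - 1) * δ := hpt
    _ ≤ (∑ y ∈ t, w y * g y.1) + ((d : ℝ) + 1) * δ := by nlinarith

set_option maxHeartbeats 1600000 in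
lemma approx_convex {d : ℕ} {X : Set (Esp d)} (hXc : Convex ℝ X) (hXo : IsOpen X)
    (hXb : Bornology.IsBounded X) {ε : ℝ} (hε : 0 < ε) {U : Set (Esp d)}
    (hU : IsBoundarySample X ε U) {γ : ℝ} (hγ : 0 < γ) {g : Esp d → ℝ}
    (hg : LipschitzOnWith (Real.toNNReal γ) g (closure X)) (hM : SatisfiesMeps ε U g) :
    ∀ x ∈ closure X, ∀ y ∈ closure X, ∀ a b : ℝ, 0 ≤ a → 0 ≤ b → a + b = 1 →
      g (a • x + b • y) ≤ a * g x + b * g y + 10 * (γ * ε) := by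
  intro x hx y hy a b ha hb hab
  have hDc : Convex ℝ (closure X) := hXc.closure
  have hz : a • x + b • y ∈ closure X := hDc hx hy ha hb hab
  have hb1 : b ≤ 1 := by linarith
  have ha1 : a ≤ 1 := by linarith
  have hzeq : a • x + b • y = x + b • (y - x) := by
    rw [show a = 1 - b by linarith]; module
  rcases le_or_gt ‖x - y‖ (8 * ε) with hsmall | hbig
  · -- Lipschitz case
    have h1 : |g (a • x + b • y) - g x| ≤ γ * ‖a • x + b • y - x‖ := lip_diff hγ.le hg hz hx
    have h2 : |g (a • x + b • y) - g y| ≤ γ * ‖a • x + b • y - y‖ := lip_diff hγ.le hg hz hy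
    have e1 : a • x + b • y - x = b • (y - x) := by
      rw [show a = 1 - b by linarith]; module
    have e2 : a • x + b • y - y = a • (x - y) := by
      rw [show b = 1 - a by linarith]; module
    rw [e1] at h1; rw [e2] at h2
    rw [norm_smul, Real.norm_eq_abs, abs_of_nonneg hb, norm_sub_rev y x] at h1
    rw [norm_smul, Real.norm_eq_abs, abs_of_nonneg ha] at h2
    have k1 : g (a • x + b • y) - g x ≤ γ * (b * ‖x - y‖) := (abs_le.mp h1).2
    have k2 : g (a • x + b • y) - g y ≤ γ * (a * ‖x - y‖) := (abs_le.mp h2).2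
    have hab4 : a * b ≤ 1/4 := by nlinarith [sq_nonneg (a - b)]
    have hsm : γ * ‖x - y‖ ≤ γ * (8 * ε) := mul_le_mul_of_nonneg_left hsmall hγ.le
    have pb : (a * b) * (γ * ‖x - y‖) ≤ 2 * (γ * ε) := by
      nlinarith [hab4, hsm, mul_nonneg ha hb, mul_nonneg hγ.le (norm_nonneg (x - y))]
    have t1 := mul_le_mul_of_nonneg_left k1 ha
    have t2 := mul_le_mul_of_nonneg_left k2 hb
    have hsplit : g (a • x + b • y) = a * g (a • x + b • y) + b * g (a • x + b • y) := by
      rw [← add_mul, hab, one_mul]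
    nlinarith [t1, t2, hsplit, pb, hγ.le, hε.le]
  · -- main case
    have hxy0 : (0:ℝ) < ‖x - y‖ := by linarith [hε]
    have hxyne : x - y ≠ 0 := by
      intro h; rw [h, norm_zero] at hxy0; linarith
    have hyxne : y - x ≠ 0 := fun h => hxyne (by
      have : x - y = -(y - x) := by abel
      rw [this, h, neg_zero])
    obtain ⟨s₀, hs₀0, hpstar⟩ := exists_frontier_ray hXo hXb hx hxyne
    obtain ⟨s₁, hs₁0, hqstar⟩ := exists_frontier_ray hXo hXb hy hyxne
    obtain ⟨p, hpU, hpp⟩ := hU.2 _ hpstar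
    obtain ⟨q, hqU, hqq⟩ := hU.2 _ hqstar
    have hpcl : p ∈ closure X := frontier_subset_closure (hU.1 hpU)
    have hqcl : q ∈ closure X := frontier_subset_closure (hU.1 hqU)
    set T : ℝ := 1 + s₁ + s₀ with hTdef
    have hT1 : 1 ≤ T := by linarith
    have hTpos : (0:ℝ) < T := by linarith
    -- chord approximation
    have key : ∀ t θ : ℝ, θ * T = t + s₀ → 0 ≤ θ → θ ≤ 1 →
        ‖(x + t • (y - x)) - (p + θ • (q - p))‖ ≤ ε := by
      intro t θ hθ hθ0 hθ1
      have ht : t = θ * (1 + s₁ + s₀) - s₀ := by rw [← hTdef]; linarith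
      have hrepr : x + t • (y - x)
          = (1 - θ) • (x + s₀ • (x - y)) + θ • (y + s₁ • (y - x)) := by
        rw [ht]; module
      have hdiff : (1 - θ) • (x + s₀ • (x - y)) + θ • (y + s₁ • (y - x)) - (p + θ • (q - p))
          = (1 - θ) • ((x + s₀ • (x - y)) - p) + θ • ((y + s₁ • (y - x)) - q) := by
        module
      rw [hrepr, hdiff]
      calc ‖(1 - θ) • ((x + s₀ • (x - y)) - p) + θ • ((y + s₁ • (y - x)) - q)‖
          ≤ ‖(1 - θ) • ((x + s₀ • (x - y)) - p)‖ + ‖θ • ((y + s₁ • (y - x)) - q)‖ :=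
            norm_add_le _ _
        _ = (1 - θ) * ‖(x + s₀ • (x - y)) - p‖ + θ * ‖(y + s₁ • (y - x)) - q‖ := by
            rw [norm_smul, norm_smul, Real.norm_eq_abs, Real.norm_eq_abs,
              abs_of_nonneg (by linarith : (0:ℝ) ≤ 1 - θ), abs_of_nonneg hθ0]
        _ ≤ (1 - θ) * ε + θ * ε := by
            have := mul_le_mul_of_nonneg_left hpp (by linarith : (0:ℝ) ≤ 1 - θ)
            have := mul_le_mul_of_nonneg_left hqq hθ0
            nlinarith
        _ = ε := by ring
    set L : ℝ := ‖q - p‖ with hLdef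
    -- the three parameters
    set θx : ℝ := s₀ / T with hθxdef
    set θz : ℝ := (b + s₀) / T with hθzdef
    set θy : ℝ := (1 + s₀) / T with hθydef
    have hθx0 : 0 ≤ θx := div_nonneg hs₀0 hTpos.le
    have hθz0 : 0 ≤ θz := div_nonneg (by linarith) hTpos.le
    have hθy0 : 0 ≤ θy := div_nonneg (by linarith) hTpos.le
    have hθx1 : θx ≤ 1 := by rw [hθxdef, div_le_one hTpos]; linarith
    have hθz1 : θz ≤ 1 := by rw [hθzdef, div_le_one hTpos]; linarith
    have hθy1 : θy ≤ 1 := by rw [hθydef, div_le_one hTpos]; linarith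
    have hxc : ‖x - (p + θx • (q - p))‖ ≤ ε := by
      have := key 0 θx (by rw [hθxdef]; field_simp; ring) hθx0 hθx1
      simpa using this
    have hyc : ‖y - (p + θy • (q - p))‖ ≤ ε := by
      have := key 1 θy (by rw [hθydef]; field_simp) hθy0 hθy1
      simpa using this
    have hzc : ‖(a • x + b • y) - (p + θz • (q - p))‖ ≤ ε := by
      have := key b θz (by rw [hθzdef]; field_simp) hθz0 hθz1
      rw [hzeq]; exact this
    -- chord length facts
    have hchord : ∀ θ θ' : ℝ, (p + θ • (q - p)) - (p + θ' • (q - p)) = (θ - θ') • (q - p) := by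
      intro θ θ'; module
    have hθyx : θy - θx = 1 / T := by rw [hθydef, hθxdef]; field_simp; ring
    have hθzx : θz - θx = b / T := by rw [hθzdef, hθxdef]; field_simp; ring
    have hθyz : θy - θz = a / T := by
      rw [hθydef, hθzdef]; rw [div_sub_div_same]; congr 1; linarith
    set B : ℝ := L / T with hBdef
    have hLnn : 0 ≤ L := norm_nonneg _
    have hBL : B ≤ L := by
      rw [hBdef, div_le_iff₀ hTpos]; nlinarith
    have hBnn : 0 ≤ B := div_nonneg hLnn hTpos.le
    have hx₁y₁ : ‖(p + θx • (q - p)) - (p + θy • (q - p))‖ = B := by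
      rw [hchord, norm_smul, Real.norm_eq_abs, ← hLdef]
      rw [show θx - θy = -(1/T) by rw [← hθyx]; ring, abs_neg,
        abs_of_nonneg (by positivity : (0:ℝ) ≤ 1/T), hBdef]
      ring
    have hBlow : ‖x - y‖ - 2 * ε ≤ B := by
      have h3 := norm_sub_le_norm_sub_add_norm_sub x (p + θx • (q - p)) y
      have h4 := norm_sub_le_norm_sub_add_norm_sub (p + θx • (q - p)) (p + θy • (q - p)) y
      rw [hx₁y₁] at h4
      have h5 : ‖(p + θy • (q - p)) - y‖ ≤ ε := by rw [norm_sub_rev]; exact hyc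
      linarith
    have hBhigh : B ≤ ‖x - y‖ + 2 * ε := by
      have h3 := norm_sub_le_norm_sub_add_norm_sub (p + θx • (q-p)) x (p + θy • (q-p))
      have h4 := norm_sub_le_norm_sub_add_norm_sub x y (p + θy • (q-p))
      rw [hx₁y₁] at h3
      have h5 : ‖(p + θx • (q - p)) - x‖ ≤ ε := by rw [norm_sub_rev]; exact hxc
      have h6 : ‖y - (p + θy • (q-p))‖ ≤ ε := hyc
      linarith
    have hB6 : 6 * ε < B := by linarith
    have hLpos : 0 < L := lt_of_lt_of_le (by linarith) hBL
    have hqp : q - p ≠ 0 := by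
      intro h; rw [hLdef, h, norm_zero] at hLpos; linarith
    have hpq : p ≠ q := fun h => hqp (by rw [h]; abel)
    -- snapping to the grid
    have snap : ∀ s : ℝ, 0 ≤ s → s ≤ L → ∃ i : ℕ, (i:ℝ) ≤ L / ε ∧ ε * i ≤ s ∧ s < ε * i + ε := by
      intro s h0 hsL
      refine ⟨⌊s / ε⌋₊, ?_, ?_, ?_⟩
      · calc ((⌊s / ε⌋₊ : ℝ)) ≤ s / ε := Nat.floor_le (div_nonneg h0 hε.le)
          _ ≤ L / ε := by gcongr
      · have h := Nat.floor_le (div_nonneg h0 hε.le)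
        calc ε * ⌊s / ε⌋₊ ≤ ε * (s / ε) := by gcongr
          _ = s := by field_simp
      · have h := Nat.lt_floor_add_one (s / ε)
        have h2 := (div_lt_iff₀ hε).mp h
        linarith only [h2]
    set sx : ℝ := θx * L with hsxdef
    set sz : ℝ := θz * L with hszdef
    set sy : ℝ := θy * L with hsydef
    have hsx0 : 0 ≤ sx := mul_nonneg hθx0 hLnn
    have hsz0 : 0 ≤ sz := mul_nonneg hθz0 hLnn
    have hsy0 : 0 ≤ sy := mul_nonneg hθy0 hLnn
    have hsxL : sx ≤ L := by
      rw [hsxdef]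
      have := mul_le_mul_of_nonneg_right hθx1 hLnn
      linarith only [this]
    have hszL : sz ≤ L := by
      rw [hszdef]
      have := mul_le_mul_of_nonneg_right hθz1 hLnn
      linarith only [this]
    have hsyL : sy ≤ L := by
      rw [hsydef]
      have := mul_le_mul_of_nonneg_right hθy1 hLnn
      linarith only [this]
    have hszx : sz - sx = b * B := by
      rw [hszdef, hsxdef, ← sub_mul, hθzx, hBdef]; ring
    have hsyz : sy - sz = a * B := by
      rw [hsydef, hszdef, ← sub_mul, hθyz, hBdef]; ring
    have hsyx : sy - sx = B := by
      rw [hsydef, hsxdef, ← sub_mul, hθyx, hBdef]; ring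
    obtain ⟨ix, hixL, hix1, hix2⟩ := snap sx hsx0 hsxL
    obtain ⟨iz, hizL, hiz1, hiz2⟩ := snap sz hsz0 hszL
    obtain ⟨iy, hiyL, hiy1, hiy2⟩ := snap sy hsy0 hsyL
    have hbB : 0 ≤ b * B := mul_nonneg hb hBnn
    have haB : 0 ≤ a * B := mul_nonneg ha hBnn
    have hixz : ix ≤ iz := by
      have h : ε * (ix:ℝ) < ε * ((iz:ℝ) + 1) := by linarith only [hix1, hiz2, hszx, hbB]
      have h2 : (ix:ℝ) < (iz:ℝ) + 1 := lt_of_mul_lt_mul_left h hε.le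
      have h3 : ix < iz + 1 := by exact_mod_cast h2
      omega
    have hizy : iz ≤ iy := by
      have h : ε * (iz:ℝ) < ε * ((iy:ℝ) + 1) := by linarith only [hiz1, hiy2, hsyz, haB]
      have h2 : (iz:ℝ) < (iy:ℝ) + 1 := lt_of_mul_lt_mul_left h hε.le
      have h3 : iz < iy + 1 := by exact_mod_cast h2
      omega
    set B' : ℝ := ε * iy - ε * ix with hB'def
    set A' : ℝ := ε * iy - ε * iz with hA'def
    have hB'low : B - ε < B' := by
      rw [hB'def]; linarith only [hiy2, hix1, hsyx]
    have hB'high : B' < B + ε := by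
      rw [hB'def]; linarith only [hiy1, hix2, hsyx]
    have hB'5 : 5 * ε < B' := by linarith only [hB'low, hB6]
    have hB'pos : 0 < B' := by linarith only [hB'5, hε]
    have hA'low : a * B - ε < A' := by
      rw [hA'def]; linarith only [hiy2, hiz1, hsyz]
    have hA'high : A' < a * B + ε := by
      rw [hA'def]; linarith only [hiy1, hiz2, hsyz]
    have hA'0 : 0 ≤ A' := by
      rw [hA'def]
      have : (iz:ℝ) ≤ (iy:ℝ) := by exact_mod_cast hizy
      have h2 := mul_le_mul_of_nonneg_left this hε.le
      linarith only [h2]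
    have hA'B' : A' ≤ B' := by
      rw [hA'def, hB'def]
      have : (ix:ℝ) ≤ (iz:ℝ) := by exact_mod_cast hixz
      have h2 := mul_le_mul_of_nonneg_left this hε.le
      linarith only [h2]
    -- the grid points
    set x' : Esp d := p + ((ε * (ix:ℝ)) / L) • (q - p) with hx'def
    set z' : Esp d := p + ((ε * (iz:ℝ)) / L) • (q - p) with hz'def
    set y' : Esp d := p + ((ε * (iy:ℝ)) / L) • (q - p) with hy'def
    have hx'mem : x' ∈ discreteSeg ε p q := ⟨ix, by rw [← hLdef]; exact hixL, by rw [← hLdef]⟩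
    have hz'mem : z' ∈ discreteSeg ε p q := ⟨iz, by rw [← hLdef]; exact hizL, by rw [← hLdef]⟩
    have hy'mem : y' ∈ discreteSeg ε p q := ⟨iy, by rw [← hLdef]; exact hiyL, by rw [← hLdef]⟩
    -- grid points are in the closure
    have hgrid_cl : ∀ c : ℝ, 0 ≤ c → c ≤ 1 → p + c • (q - p) ∈ closure X := by
      intro c h0 h1
      have heq : p + c • (q - p) = (1 - c) • p + c • q := by module
      rw [heq]
      exact hDc hpcl hqcl (by linarith only [h1]) h0 (by ring)
    have hcx0 : 0 ≤ ε * (ix:ℝ) / L := by positivity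
    have hcz0 : 0 ≤ ε * (iz:ℝ) / L := by positivity
    have hcy0 : 0 ≤ ε * (iy:ℝ) / L := by positivity
    have hcx1 : ε * (ix:ℝ) / L ≤ 1 := by
      rw [div_le_one hLpos]; linarith only [hix1, hsxL]
    have hcz1 : ε * (iz:ℝ) / L ≤ 1 := by
      rw [div_le_one hLpos]; linarith only [hiz1, hszL]
    have hcy1 : ε * (iy:ℝ) / L ≤ 1 := by
      rw [div_le_one hLpos]; linarith only [hiy1, hsyL]
    have hx'cl : x' ∈ closure X := hgrid_cl _ hcx0 hcx1
    have hz'cl : z' ∈ closure X := hgrid_cl _ hcz0 hcz1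
    have hy'cl : y' ∈ closure X := hgrid_cl _ hcy0 hcy1
    -- distance from true points to grid points
    have hgrid_close : ∀ (i : ℕ) (θ s : ℝ), s = θ * L → ε * i ≤ s → s < ε * i + ε →
        ‖(p + θ • (q - p)) - (p + ((ε * (i:ℝ)) / L) • (q - p))‖ ≤ ε := by
      intro i θ s hs h1 h2
      rw [hchord, norm_smul, Real.norm_eq_abs, ← hLdef]
      have he : θ - ε * (i:ℝ) / L = (s - ε * i) / L := by
        rw [hs]; field_simp
      rw [he, abs_div, abs_of_pos hLpos, div_mul_cancel₀ _ hLpos.ne']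
      rw [abs_of_nonneg (by linarith only [h1])]
      linarith only [h2]
    have hxx' : ‖x - x'‖ ≤ 2 * ε := by
      have h1 := hgrid_close ix θx sx hsxdef hix1 hix2
      calc ‖x - x'‖ ≤ ‖x - (p + θx • (q - p))‖ + ‖(p + θx • (q - p)) - x'‖ :=
            norm_sub_le_norm_sub_add_norm_sub _ _ _
        _ ≤ ε + ε := add_le_add hxc (by rw [hx'def]; exact h1)
        _ = 2 * ε := by ring
    have hyy' : ‖y - y'‖ ≤ 2 * ε := by
      have h1 := hgrid_close iy θy sy hsydef hiy1 hiy2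
      calc ‖y - y'‖ ≤ ‖y - (p + θy • (q - p))‖ + ‖(p + θy • (q - p)) - y'‖ :=
            norm_sub_le_norm_sub_add_norm_sub _ _ _
        _ ≤ ε + ε := add_le_add hyc (by rw [hy'def]; exact h1)
        _ = 2 * ε := by ring
    have hzz' : ‖(a • x + b • y) - z'‖ ≤ 2 * ε := by
      have h1 := hgrid_close iz θz sz hszdef hiz1 hiz2
      calc ‖(a • x + b • y) - z'‖
          ≤ ‖(a • x + b • y) - (p + θz • (q - p))‖ + ‖(p + θz • (q - p)) - z'‖ :=
            norm_sub_le_norm_sub_add_norm_sub _ _ _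
        _ ≤ ε + ε := add_le_add hzc (by rw [hz'def]; exact h1)
        _ = 2 * ε := by ring
    -- norms between grid points
    have hy'x' : ‖x' - y'‖ = B' := by
      rw [hx'def, hy'def, hchord, norm_smul, Real.norm_eq_abs, ← hLdef]
      have he : ε * (ix:ℝ) / L - ε * (iy:ℝ) / L = -(B' / L) := by
        rw [hB'def]; field_simp; ring
      rw [he, abs_neg, abs_div, abs_of_pos hLpos, div_mul_cancel₀ _ hLpos.ne',
        abs_of_nonneg hB'pos.le]
    have hz'y' : ‖z' - y'‖ = A' := by
      rw [hz'def, hy'def, hchord, norm_smul, Real.norm_eq_abs, ← hLdef]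
      have he : ε * (iz:ℝ) / L - ε * (iy:ℝ) / L = -(A' / L) := by
        rw [hA'def]; field_simp; ring
      rw [he, abs_neg, abs_div, abs_of_pos hLpos, div_mul_cancel₀ _ hLpos.ne',
        abs_of_nonneg hA'0]
    have hne : x' ≠ y' := by
      intro h
      rw [h, sub_self, norm_zero] at hy'x'
      linarith only [hy'x', hB'pos]
    -- z' lies on the segment [x', y']
    have hixiy : (ix:ℝ) < (iy:ℝ) := by
      have h : ε * (ix:ℝ) < ε * (iy:ℝ) := by linarith only [hB'5, hB'def, hε]
      exact lt_of_mul_lt_mul_left h hε.le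
    set mu : ℝ := ((iz:ℝ) - ix) / ((iy:ℝ) - ix) with hmudef
    have hden : (0:ℝ) < (iy:ℝ) - (ix:ℝ) := by linarith only [hixiy]
    have hmu0 : 0 ≤ mu := by
      apply div_nonneg _ hden.le
      have : (ix:ℝ) ≤ (iz:ℝ) := by exact_mod_cast hixz
      linarith only [this]
    have hmu1 : mu ≤ 1 := by
      rw [hmudef, div_le_one hden]
      have : (iz:ℝ) ≤ (iy:ℝ) := by exact_mod_cast hizy
      linarith only [this]
    have hmucancel : mu * ((iy:ℝ) - ix) = (iz:ℝ) - ix := div_mul_cancel₀ _ hden.ne'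
    have hcoef : (1 - mu) * (ε * (ix:ℝ)) + mu * (ε * (iy:ℝ)) = ε * (iz:ℝ) := by
      linear_combination ε * hmucancel
    have hseg : z' ∈ segment ℝ x' y' := by
      refine ⟨1 - mu, mu, by linarith only [hmu1], hmu0, by ring, ?_⟩
      rw [hz'def, hx'def, hy'def, ← hcoef]
      match_scalars <;> field_simp <;> ring
    -- apply the constraint
    have hell := hM x' y' z' ⟨p, hpU, q, hqU, hpq, hx'mem, hy'mem, hz'mem, hne, hseg⟩
    rw [ellVal, hz'y', hy'x'] at hell
    set lam : ℝ := A' / B' with hlamdef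
    have hlam0 : 0 ≤ lam := div_nonneg hA'0 hB'pos.le
    have hlam1 : lam ≤ 1 := by rw [hlamdef, div_le_one hB'pos]; exact hA'B'
    -- Lipschitz transfers
    have kx : g x' ≤ g x + γ * (2 * ε) := by
      have h1 := lip_diff hγ.le hg hx'cl hx
      have h2 := mul_le_mul_of_nonneg_left (by rw [norm_sub_rev]; exact hxx' :
        ‖x' - x‖ ≤ 2 * ε) hγ.le
      have h3 := (abs_le.mp h1).2
      linarith only [h2, h3]
    have ky : g y' ≤ g y + γ * (2 * ε) := by
      have h1 := lip_diff hγ.le hg hy'cl hy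
      have h2 := mul_le_mul_of_nonneg_left (by rw [norm_sub_rev]; exact hyy' :
        ‖y' - y‖ ≤ 2 * ε) hγ.le
      have h3 := (abs_le.mp h1).2
      linarith only [h2, h3]
    have kz : g (a • x + b • y) ≤ g z' + γ * (2 * ε) := by
      have h1 := lip_diff hγ.le hg hz hz'cl
      have h2 := mul_le_mul_of_nonneg_left hzz' hγ.le
      have h3 := (abs_le.mp h1).2
      linarith only [h2, h3]
    -- |lam - a| * ‖x - y‖ ≤ 4ε
    have haε : a * ε ≤ ε := by
      have := mul_le_mul_of_nonneg_right ha1 hε.le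
      linarith only [this]
    have habs1 : |lam - a| ≤ 2 * ε / B' := by
      rw [hlamdef]
      have he : A' / B' - a = (A' - a * B') / B' := by field_simp
      rw [he, abs_div, abs_of_pos hB'pos]
      gcongr
      have m1 : a * (B - ε) ≤ a * B' := mul_le_mul_of_nonneg_left hB'low.le ha
      have m2 : a * B' ≤ a * (B + ε) := mul_le_mul_of_nonneg_left hB'high.le ha
      rw [abs_le]
      constructor
      · nlinarith only [hA'low, m2, haε, ha, hε]
      · nlinarith only [hA'high, m1, haε, ha, hε]
    have habs : |lam - a| * ‖x - y‖ ≤ 4 * ε := by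
      have h2 : ‖x - y‖ ≤ B' + 3 * ε := by linarith only [hBlow, hB'low]
      calc |lam - a| * ‖x - y‖ ≤ (2 * ε / B') * (B' + 3 * ε) := by
            apply mul_le_mul habs1 h2 (norm_nonneg _) (by positivity)
        _ ≤ 4 * ε := by
            rw [div_mul_eq_mul_div, div_le_iff₀ hB'pos]
            nlinarith only [hB'5, hε]
    -- final assembly
    have hmix : lam * g x' + (1 - lam) * g y' ≤ lam * g x + (1 - lam) * g y + γ * (2 * ε) := by
      have t1 := mul_le_mul_of_nonneg_left kx hlam0
      have t2 := mul_le_mul_of_nonneg_left ky (by linarith only [hlam1] : (0:ℝ) ≤ 1 - lam)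
      nlinarith only [t1, t2]
    have hswitch : lam * g x + (1 - lam) * g y ≤ a * g x + b * g y + γ * (4 * ε) := by
      have e3 : lam * g x + (1 - lam) * g y - (a * g x + b * g y)
          = (lam - a) * (g x - g y) := by
        rw [show b = 1 - a by linarith only [hab]]; ring
      have h3 : (lam - a) * (g x - g y) ≤ |lam - a| * |g x - g y| := by
        calc (lam - a) * (g x - g y) ≤ |(lam - a) * (g x - g y)| := le_abs_self _
          _ = |lam - a| * |g x - g y| := abs_mul _ _
      have h4 : |g x - g y| ≤ γ * ‖x - y‖ := lip_diff hγ.le hg hx hy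
      have h5 : |lam - a| * |g x - g y| ≤ |lam - a| * (γ * ‖x - y‖) :=
        mul_le_mul_of_nonneg_left h4 (abs_nonneg _)
      have h6 := mul_le_mul_of_nonneg_left habs hγ.le
      nlinarith only [e3, h3, h5, h6]
    have hgz' : g z' ≤ lam * g x' + (1 - lam) * g y' := by linarith only [hell]
    have hγε : 0 ≤ γ * ε := mul_nonneg hγ.le hε.le
    nlinarith only [kz, hgz', hmix, hswitch, hγε]

/-- There is a constant `C = C(d)` such that for every bounded open convex
`X ⊆ ℝ^d`, every `ε > 0`, every boundary `ε`-sample `U ⊆ ∂X` with constraint set `M_ε`,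
and every `γ > 0`: for every `γ`-Lipschitz `g ∈ C(X)` with `ℓ(g) ≤ 0` for all `ℓ ∈ M_ε`,
there exists a convex `γ`-Lipschitz function `f` on `X` with `‖g − f‖_∞ ≤ C γ ε`
(that is, `d_H(B_Lip^γ ∩ H_{M_ε} | B_Lip^γ ∩ H) ≤ C γ ε`). -/
theorem stmt1 (d : ℕ) : ∃ C : ℝ, 0 < C ∧
    ∀ (X : Set (Esp d)), Convex ℝ X → IsOpen X → Bornology.IsBounded X →
    ∀ ε : ℝ, 0 < ε → ∀ U : Set (Esp d), IsBoundarySample X ε U →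
    ∀ γ : ℝ, 0 < γ →
    ∀ g : Esp d → ℝ, LipschitzOnWith (Real.toNNReal γ) g (closure X) →
    SatisfiesMeps ε U g →
    ∃ f : Esp d → ℝ, ConvexOn ℝ X f ∧ LipschitzOnWith (Real.toNNReal γ) f X ∧
      ∀ x ∈ X, |g x - f x| ≤ C * γ * ε := by
  refine ⟨10 * ((d : ℝ) + 2), by positivity, ?_⟩
  intro X hXc hXo hXb ε hε U hU γ hγ g hg hM
  rcases Set.eq_empty_or_nonempty X with hXe | hXne
  · subst hXe
    refine ⟨g, ⟨convex_empty, fun u hu => absurd hu (Set.notMem_empty u)⟩, ?_, ?_⟩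
    · intro u hu; exact absurd hu (Set.notMem_empty u)
    · intro u hu; exact absurd hu (Set.notMem_empty u)
  have hDc : Convex ℝ (closure X) := hXc.closure
  have hδ0 : (0:ℝ) ≤ 10 * (γ * ε) := by positivity
  have hA := approx_convex hXc hXo hXb hε hU hγ hg hM
  set G : Set (Esp d × ℝ) := (fun w => (w, g w)) '' closure X with hGdef
  set K : Set (Esp d × ℝ) := convexHull ℝ G with hKdef
  have hB' : ∀ wr ∈ K, wr.1 ∈ closure X ∧ g wr.1 ≤ wr.2 + ((d : ℝ) + 1) * (10 * (γ * ε)) :=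
    fun wr hwr => hull_bound hDc hδ0 hA hwr
  set val : Esp d → (Esp d × ℝ) → ℝ := fun u pr => pr.2 + γ * ‖u - pr.1‖ with hvaldef
  set f : Esp d → ℝ := fun u => sInf (val u '' K) with hfdef
  obtain ⟨x₀, hx₀⟩ := hXne
  have hKne : K.Nonempty :=
    ⟨(x₀, g x₀), subset_convexHull ℝ G ⟨x₀, subset_closure hx₀, rfl⟩⟩
  have hlb : ∀ u ∈ closure X, ∀ r ∈ val u '' K,
      g u - ((d : ℝ) + 1) * (10 * (γ * ε)) ≤ r := by
    rintro u hu r ⟨⟨w, t⟩, hwt, rfl⟩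
    obtain ⟨hw1, hw2⟩ := hB' _ hwt
    have hl := lip_diff hγ.le hg hu hw1
    have h2 := (abs_le.mp hl).2
    simp only [hvaldef]
    linarith only [h2, hw2]
  have hbdd : ∀ u ∈ closure X, BddBelow (val u '' K) :=
    fun u hu => ⟨_, fun r hr => hlb u hu r hr⟩
  have hfge : ∀ u ∈ closure X, g u - ((d : ℝ) + 1) * (10 * (γ * ε)) ≤ f u :=
    fun u hu => le_csInf (hKne.image _) (hlb u hu)
  have hfle : ∀ u ∈ closure X, f u ≤ g u := by
    intro u hu
    have hmem : (u, g u) ∈ K := subset_convexHull ℝ G ⟨u, hu, rfl⟩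
    have hval : val u (u, g u) = g u := by simp [hvaldef]
    calc f u ≤ val u (u, g u) := csInf_le (hbdd u hu) (Set.mem_image_of_mem _ hmem)
      _ = g u := hval
  have hflip : ∀ u ∈ closure X, ∀ v ∈ closure X, f u ≤ f v + γ * ‖u - v‖ := by
    intro u hu v hv
    have hstep : ∀ r ∈ val v '' K, f u - γ * ‖u - v‖ ≤ r := by
      rintro r ⟨⟨w, t⟩, hwt, rfl⟩
      have h1 : f u ≤ val u (w, t) := csInf_le (hbdd u hu) (Set.mem_image_of_mem _ hwt)
      have h2 : ‖u - w‖ ≤ ‖u - v‖ + ‖v - w‖ := norm_sub_le_norm_sub_add_norm_sub _ _ _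
      have h3 := mul_le_mul_of_nonneg_left h2 hγ.le
      simp only [hvaldef] at h1 ⊢
      linarith only [h1, h3]
    have := le_csInf (hKne.image _) hstep
    linarith only [this]
  have hlip : LipschitzOnWith (Real.toNNReal γ) f X := by
    rw [lipschitzOnWith_iff_dist_le_mul]
    intro u hu v hv
    rw [Real.coe_toNNReal γ hγ.le, Real.dist_eq, dist_eq_norm]
    have h1 := hflip u (subset_closure hu) v (subset_closure hv)
    have h2 := hflip v (subset_closure hv) u (subset_closure hu)
    rw [norm_sub_rev] at h2
    rw [abs_le]
    constructor <;> linarith only [h1, h2]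
  have hconv : ConvexOn ℝ X f := by
    refine ⟨hXc, fun u hu v hv a b ha hb hab => ?_⟩
    have hz : a • u + b • v ∈ X := hXc hu hv ha hb hab
    simp only [smul_eq_mul]
    apply le_of_forall_pos_le_add
    intro η hη
    have hfu : sInf (val u '' K) < f u + η := by
      simp only [hfdef]; linarith only [hη]
    have hfv : sInf (val v '' K) < f v + η := by
      simp only [hfdef]; linarith only [hη]
    obtain ⟨r1, hr1K, hr1⟩ := exists_lt_of_csInf_lt (hKne.image _) hfu
    obtain ⟨r2, hr2K, hr2⟩ := exists_lt_of_csInf_lt (hKne.image _) hfv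
    obtain ⟨⟨w1, t1⟩, hw1K, hr1e⟩ := hr1K
    obtain ⟨⟨w2, t2⟩, hw2K, hr2e⟩ := hr2K
    have hmK : a • (w1, t1) + b • (w2, t2) ∈ K :=
      (convex_convexHull ℝ G) hw1K hw2K ha hb hab
    have hmeq : a • ((w1, t1) : Esp d × ℝ) + b • (w2, t2)
        = ((a • w1 + b • w2 : Esp d), (a * t1 + b * t2 : ℝ)) := by
      simp [Prod.ext_iff, smul_eq_mul]
    rw [hmeq] at hmK
    have hfz : f (a • u + b • v) ≤ val (a • u + b • v) (a • w1 + b • w2, a * t1 + b * t2) :=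
      csInf_le (hbdd _ (subset_closure hz)) (Set.mem_image_of_mem _ hmK)
    have hnorm : ‖(a • u + b • v) - (a • w1 + b • w2)‖ ≤ a * ‖u - w1‖ + b * ‖v - w2‖ := by
      have he : (a • u + b • v) - (a • w1 + b • w2) = a • (u - w1) + b • (v - w2) := by
        module
      rw [he]
      calc ‖a • (u - w1) + b • (v - w2)‖ ≤ ‖a • (u - w1)‖ + ‖b • (v - w2)‖ := norm_add_le _ _
        _ = a * ‖u - w1‖ + b * ‖v - w2‖ := by
            rw [norm_smul, norm_smul, Real.norm_eq_abs, Real.norm_eq_abs,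
              abs_of_nonneg ha, abs_of_nonneg hb]
    simp only [hvaldef] at hfz hr1e hr2e ⊢
    rw [← hr1e] at hr1
    rw [← hr2e] at hr2
    have hmul1 := mul_le_mul_of_nonneg_left hr1.le ha
    have hmul2 := mul_le_mul_of_nonneg_left hr2.le hb
    have hγn := mul_le_mul_of_nonneg_left hnorm hγ.le
    have hab' : a * η + b * η = η := by rw [← add_mul, hab, one_mul]
    nlinarith only [hfz, hγn, hmul1, hmul2, hab', hη]
  refine ⟨f, hconv, hlip, ?_⟩
  intro u hu
  have h1 := hfge u (subset_closure hu)
  have h2 := hfle u (subset_closure hu)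
  have hγε : (0:ℝ) ≤ γ * ε := by positivity
  have hdd : ((d : ℝ) + 1) * (10 * (γ * ε)) ≤ 10 * ((d : ℝ) + 2) * γ * ε := by
    have hd0 : (0:ℝ) ≤ (d : ℝ) := Nat.cast_nonneg d
    nlinarith only [hγε, hd0]
  have hC : (0:ℝ) ≤ 10 * ((d : ℝ) + 2) * γ * ε := by positivity
  rw [abs_le]
  constructor <;> linarith only [h1, h2, hdd, hC]

end
end

section
/- There is a universal constant C with the following property. Let X be a bounded open convex subset of ℝ^d, let I_δ : C(X) → E_δ be an interpolation operator with constant C_I ≥ 1, let U_ε ⊆ ∂X be a boundary ε-sample with associated discretized constraint set M_ε, and let γ ≥ 2·C_I·diam(X). Assume δ ≤ ε/2, ε ≤ diam(X), and 4δγ ≤ ε². Then for every convex (γ/C_I)-Lipschitz function f on X there exists h ∈ E_δ ∩ H_{M_ε} which is γ-Lipschitz and satisfies ‖f − h‖_∞ ≤ C γ² δ diam(X)/ε²; in particular d_H(B_Lip^{γ/C_I} ∩ H | B_Lip^γ ∩ E_δ ∩ H_{M_ε}) ≤ C γ² δ diam(X)/ε². -/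
open Set NNReal

noncomputable section

/-- An interpolation operator `I_δ : C(X) → E_δ` with constant `C_I`: a continuous linear
map onto a finite-dimensional subspace `E_δ` of `C(X)` containing the affine functions,
restricting to the identity on `E_δ`, and satisfying (L1), (L2), (L3). -/
structure InterpOp (d : ℕ) (X : Set (Esp d)) (δ CI : ℝ) where
  /-- the finite-dimensional subspace `E_δ ⊆ C(X)` -/
  E : Submodule ℝ (Esp d → ℝ)
  findim : FiniteDimensional ℝ E
  contE : ∀ f ∈ E, ContinuousOn f (closure X)
  /-- the (linear) interpolation operator -/
  I : (Esp d → ℝ) →ₗ[ℝ] (Esp d → ℝ)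
  mem_E : ∀ f, I f ∈ E
  /-- continuity (boundedness) of `I` with respect to the sup norm on `X` -/
  bounded : ∃ B : ℝ, ∀ (f : Esp d → ℝ) (r : ℝ), 0 ≤ r → (∀ x ∈ X, |f x| ≤ r) →
    ∀ x ∈ X, |I f x| ≤ B * r
  /-- `I` restricts to the identity on `E_δ` -/
  id_on_E : ∀ f ∈ E, I f = f
  /-- `E_δ` contains the affine functions -/
  affine_mem : ∀ (v : Esp d) (c : ℝ), (fun x => (inner ℝ v x : ℝ) + c) ∈ E
  /-- (L1): `Lip(I_δ f) ≤ C_I Lip(f)` -/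
  lip1 : ∀ (f : Esp d → ℝ) (L : ℝ≥0), LipschitzOnWith L f X →
    LipschitzOnWith (Real.toNNReal CI * L) (I f) X
  /-- (L2): `‖f − I_δ f‖_∞ ≤ δ Lip(f)` -/
  lip2 : ∀ (f : Esp d → ℝ) (L : ℝ≥0), LipschitzOnWith L f X →
    ∀ x ∈ X, |f x - I f x| ≤ δ * L
  /-- (L3): `‖f − I_δ f‖_∞ ≤ (δ²/2) Lip(∇f)` for `f` with Lipschitz gradient -/
  lip3 : ∀ (f : Esp d → ℝ) (f' : Esp d → Esp d) (L : ℝ≥0),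
    (∀ x ∈ X, HasGradientAt f (f' x) x) → LipschitzOnWith L f' X →
    ∀ x ∈ X, |f x - I f x| ≤ δ ^ 2 / 2 * L

-- parallelogram-type identity
lemma sq_combo {E : Type*} [NormedAddCommGroup E] [InnerProductSpace ℝ E] (u v : E) (a b : ℝ)
    (hab : a + b = 1) :
    ‖a • u + b • v‖ ^ 2 = a * ‖u‖ ^ 2 + b * ‖v‖ ^ 2 - a * b * ‖u - v‖ ^ 2 := by
  have h1 : ‖a • u + b • v‖ ^ 2 = a ^ 2 * ‖u‖ ^ 2 + 2 * (a * b * inner ℝ u v) + b ^ 2 * ‖v‖ ^ 2 := by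
    rw [norm_add_sq_real, real_inner_smul_left, real_inner_smul_right, norm_smul, norm_smul]
    rw [mul_pow, mul_pow, Real.norm_eq_abs, Real.norm_eq_abs, sq_abs, sq_abs]
    ring
  have h2 : ‖u - v‖ ^ 2 = ‖u‖ ^ 2 - 2 * inner ℝ u v + ‖v‖ ^ 2 := by
    rw [norm_sub_sq_real]
  have hb : b = 1 - a := by linarith
  subst hb
  rw [h1, h2]; ring

-- inf-convolution extension
lemma infconv {d : ℕ} (X : Set (Esp d)) (hXc : Convex ℝ X) (hne : X.Nonempty)
    (f : Esp d → ℝ) (L : ℝ) (hL : 0 ≤ L) (hf : ConvexOn ℝ X f)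
    (hlip : ∀ a ∈ X, ∀ b ∈ X, |f a - f b| ≤ L * dist a b) :
    ∃ F : Esp d → ℝ, (∀ x ∈ X, F x = f x) ∧ ConvexOn ℝ univ F ∧
      (∀ a b, |F a - F b| ≤ L * dist a b) := by
  obtain ⟨w₀, hw₀⟩ := hne
  set S : Esp d → Set ℝ := fun x => (fun w => f w + L * dist x w) '' X with hS
  have hSne : ∀ x, (S x).Nonempty := fun x => ⟨_, ⟨w₀, hw₀, rfl⟩⟩
  have hSbdd : ∀ x, BddBelow (S x) := by
    intro x
    refine ⟨f w₀ - L * dist x w₀, ?_⟩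
    rintro r ⟨w, hw, rfl⟩
    dsimp only
    have h1 : |f w₀ - f w| ≤ L * dist w₀ w := hlip _ hw₀ _ hw
    have h2 : dist w₀ w ≤ dist w₀ x + dist x w := dist_triangle _ _ _
    have h3 : dist w₀ x = dist x w₀ := dist_comm _ _
    have h4 : L * dist w₀ w ≤ L * (dist x w₀ + dist x w) := by
      apply mul_le_mul_of_nonneg_left _ hL; rw [← h3]; linarith
    have := abs_le.1 h1
    nlinarith
  refine ⟨fun x => sInf (S x), ?_, ?_, ?_⟩
  · intro x hx
    apply le_antisymm
    · have : f x + L * dist x x ∈ S x := ⟨x, hx, rfl⟩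
      have := csInf_le (hSbdd x) this
      simpa using this
    · apply le_csInf (hSne x)
      rintro r ⟨w, hw, rfl⟩
      dsimp only
      have h1 := abs_le.1 (hlip x hx w hw)
      linarith [h1.1]
  · refine ⟨convex_univ, ?_⟩
    intro x _ y _ a b ha hb hab
    refine le_of_forall_pos_le_add ?_
    intro η hη
    obtain ⟨r₁, ⟨w₁, hw₁, rfl⟩, hr₁⟩ := exists_lt_of_csInf_lt (hSne x)
      (lt_add_of_pos_right (sInf (S x)) (half_pos hη))
    obtain ⟨r₂, ⟨w₂, hw₂, rfl⟩, hr₂⟩ := exists_lt_of_csInf_lt (hSne y)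
      (lt_add_of_pos_right (sInf (S y)) (half_pos hη))
    have hw : a • w₁ + b • w₂ ∈ X := hXc hw₁ hw₂ ha hb hab
    have hmem : f (a • w₁ + b • w₂) + L * dist (a • x + b • y) (a • w₁ + b • w₂)
        ∈ S (a • x + b • y) := ⟨_, hw, rfl⟩
    have hle := csInf_le (hSbdd _) hmem
    have hfconv : f (a • w₁ + b • w₂) ≤ a * f w₁ + b * f w₂ := hf.2 hw₁ hw₂ ha hb hab
    have hdist : dist (a • x + b • y) (a • w₁ + b • w₂) ≤ a * dist x w₁ + b * dist y w₂ := by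
      rw [dist_eq_norm, dist_eq_norm, dist_eq_norm]
      have : a • x + b • y - (a • w₁ + b • w₂) = a • (x - w₁) + b • (y - w₂) := by
        rw [smul_sub, smul_sub]; abel
      rw [this]
      calc ‖a • (x - w₁) + b • (y - w₂)‖ ≤ ‖a • (x - w₁)‖ + ‖b • (y - w₂)‖ := norm_add_le _ _
        _ = a * ‖x - w₁‖ + b * ‖y - w₂‖ := by
            rw [norm_smul, norm_smul, Real.norm_eq_abs, Real.norm_eq_abs,
              abs_of_nonneg ha, abs_of_nonneg hb]
    have hLd : L * dist (a • x + b • y) (a • w₁ + b • w₂)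
        ≤ a * (L * dist x w₁) + b * (L * dist y w₂) := by
      calc L * dist (a • x + b • y) (a • w₁ + b • w₂)
          ≤ L * (a * dist x w₁ + b * dist y w₂) := mul_le_mul_of_nonneg_left hdist hL
        _ = a * (L * dist x w₁) + b * (L * dist y w₂) := by ring
    have e1 : a * (f w₁ + L * dist x w₁) ≤ a * (sInf (S x) + η / 2) :=
      mul_le_mul_of_nonneg_left (le_of_lt hr₁) ha
    have e2 : b * (f w₂ + L * dist y w₂) ≤ b * (sInf (S y) + η / 2) :=
      mul_le_mul_of_nonneg_left (le_of_lt hr₂) hb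
    have hab' : a * (η/2) + b * (η/2) = η/2 := by rw [← add_mul, hab]; ring
    dsimp only at hr₁ hr₂ ⊢
    simp only [smul_eq_mul]
    nlinarith
  · intro x y
    have key : ∀ u v : Esp d, sInf (S u) ≤ sInf (S v) + L * dist u v := by
      intro u v
      have : sInf (S u) - L * dist u v ≤ sInf (S v) := by
        apply le_csInf (hSne v)
        rintro r ⟨w, hw, rfl⟩
        dsimp only
        have hmem : f w + L * dist u w ∈ S u := ⟨w, hw, rfl⟩
        have hle := csInf_le (hSbdd u) hmem
        have h2 : dist u w ≤ dist u v + dist v w := dist_triangle _ _ _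
        nlinarith [mul_le_mul_of_nonneg_left h2 hL]
      linarith
    have h1 := key x y
    have h2 := key y x
    rw [dist_comm y x] at h2
    rw [abs_sub_le_iff]
    constructor <;> linarith

set_option maxHeartbeats 1000000

lemma dseg_mem_closure {d : ℕ} {X : Set (Esp d)} (hXc : Convex ℝ X) {ε : ℝ} (hε : 0 < ε)
    {p q a : Esp d} (hp : p ∈ closure X) (hq : q ∈ closure X) (hpq : p ≠ q)
    (ha : a ∈ discreteSeg ε p q) : a ∈ closure X := by
  obtain ⟨i, hi, rfl⟩ := ha
  have hN : 0 < ‖q - p‖ := by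
    rw [norm_pos_iff]; exact sub_ne_zero.2 (Ne.symm hpq)
  set t : ℝ := ε * i / ‖q - p‖ with htdef
  have ht0 : 0 ≤ t := by positivity
  have ht1 : t ≤ 1 := by
    rw [htdef, div_le_one hN]
    have := (le_div_iff₀ hε).1 hi
    linarith
  have heq : p + t • (q - p) = (1 - t) • p + t • q := by
    rw [smul_sub, sub_smul, one_smul]; abel
  rw [heq]
  exact hXc.closure hp hq (by linarith) ht0 (by ring)

lemma dseg_dist {d : ℕ} {ε : ℝ} (hε : 0 < ε) {p q a b : Esp d} (hpq : p ≠ q)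
    (ha : a ∈ discreteSeg ε p q) (hb : b ∈ discreteSeg ε p q) (hab : a ≠ b) :
    ε ≤ ‖a - b‖ := by
  obtain ⟨i, hi, rfl⟩ := ha
  obtain ⟨j, hj, rfl⟩ := hb
  have hN : 0 < ‖q - p‖ := by
    rw [norm_pos_iff]; exact sub_ne_zero.2 (Ne.symm hpq)
  have hij : i ≠ j := by
    rintro rfl; exact hab rfl
  have heq : p + (ε * i / ‖q - p‖) • (q - p) - (p + (ε * j / ‖q - p‖) • (q - p))
      = ((ε * i - ε * j) / ‖q - p‖) • (q - p) := by
    have e : (ε * (i:ℝ) - ε * j) / ‖q - p‖ = ε * i / ‖q - p‖ - ε * j / ‖q - p‖ :=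
      sub_div _ _ _
    rw [e, sub_smul]; abel
  rw [heq, norm_smul, Real.norm_eq_abs, abs_div, abs_of_pos hN, div_mul_cancel₀ _ (ne_of_gt hN)]
  have h1 : (1 : ℝ) ≤ |(i : ℝ) - (j : ℝ)| := by
    have : ((i : ℤ) - (j : ℤ)) ≠ 0 := sub_ne_zero.2 (by exact_mod_cast hij)
    have h2 := Int.one_le_abs this
    calc (1 : ℝ) ≤ |((i : ℤ) - (j : ℤ) : ℤ)| := by exact_mod_cast h2
      _ = |(i : ℝ) - (j : ℝ)| := by push_cast; ring_nf
  calc ε = ε * 1 := by ring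
    _ ≤ ε * |(i : ℝ) - (j : ℝ)| := by nlinarith
    _ = |ε * i - ε * j| := by
        rw [← mul_sub, abs_mul, abs_of_pos hε]

/-- There is a universal constant `C` such that: for every bounded open convex
`X ⊆ ℝ^d`, interpolation operator `I_δ : C(X) → E_δ` with constant `C_I ≥ 1`, boundary
`ε`-sample `U_ε ⊆ ∂X` with constraint set `M_ε`, and `γ ≥ 2 C_I diam(X)`, if `δ ≤ ε/2`,
`ε ≤ diam(X)` and `4δγ ≤ ε²`, then for every convex `(γ/C_I)`-Lipschitz `f` on `X` there
is `h ∈ E_δ ∩ H_{M_ε}`, `γ`-Lipschitz, with `‖f − h‖_∞ ≤ C γ² δ diam(X)/ε²`; in particular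
`d_H(B_Lip^{γ/C_I} ∩ H | B_Lip^γ ∩ E_δ ∩ H_{M_ε}) ≤ C γ² δ diam(X)/ε²`. -/
theorem stmt2 : ∃ C : ℝ, 0 < C ∧
    ∀ (d : ℕ) (X : Set (Esp d)), Convex ℝ X → IsOpen X → Bornology.IsBounded X →
    ∀ δ CI ε γ : ℝ, 0 < δ → 1 ≤ CI → 0 < ε →
    ∀ op : InterpOp d X δ CI, ∀ U : Set (Esp d), IsBoundarySample X ε U →
    2 * CI * Metric.diam X ≤ γ → δ ≤ ε / 2 → ε ≤ Metric.diam X → 4 * δ * γ ≤ ε ^ 2 →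
    ∀ f : Esp d → ℝ, ConvexOn ℝ X f → LipschitzOnWith (Real.toNNReal (γ / CI)) f X →
    ∃ h : Esp d → ℝ, h ∈ op.E ∧ SatisfiesMeps ε U h ∧
      LipschitzOnWith (Real.toNNReal γ) h X ∧
      ∀ x ∈ X, |f x - h x| ≤ C * γ ^ 2 * δ * Metric.diam X / ε ^ 2 := by
  refine ⟨7, by norm_num, ?_⟩
  intro d X hXconv hXopen hXbdd δ CI ε γ hδ hCI hε op U hU hγdiam hδε hεD hkey f hfconv hflip
  set D := Metric.diam X with hDdef
  have hD0 : 0 < D := lt_of_lt_of_le hε hεD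
  have hXne : X.Nonempty := by
    by_contra hcon
    rw [not_nonempty_iff_eq_empty] at hcon
    rw [hDdef, hcon, Metric.diam_empty] at hD0
    exact lt_irrefl 0 hD0
  obtain ⟨x₀, hx₀⟩ := hXne
  have hCI0 : 0 < CI := lt_of_lt_of_le one_pos hCI
  have hγ0 : 0 < γ := lt_of_lt_of_le (by positivity) hγdiam
  set L : ℝ := γ / CI with hLdef
  have hL0 : 0 < L := div_pos hγ0 hCI0
  have hflip' : ∀ a ∈ X, ∀ b ∈ X, |f a - f b| ≤ L * dist a b := by
    intro a ha b hb
    have := hflip.dist_le_mul a ha b hb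
    rwa [Real.dist_eq, Real.coe_toNNReal _ hL0.le] at this
  obtain ⟨F, hFeq, hFconv, hFlip⟩ := infconv X hXconv ⟨x₀, hx₀⟩ f L hL0.le hfconv hflip'
  set θ : ℝ := 8 * δ * D / ε ^ 2 with hθdef
  set μ : ℝ := 4 * δ * γ / (CI * ε ^ 2) with hμdef
  have hθ0 : 0 ≤ θ := by positivity
  have hμ0 : 0 < μ := by positivity
  have hDγ : 2 * D ≤ γ := by nlinarith [mul_nonneg (by linarith : (0:ℝ) ≤ CI - 1) hD0.le]
  have hθ1 : θ ≤ 1 := by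
    rw [hθdef, div_le_one (by positivity)]
    nlinarith [mul_le_mul_of_nonneg_left hDγ hδ.le]
  have hrel : θ * L = 2 * μ * D := by
    rw [hθdef, hμdef, hLdef]
    field_simp
    ring
  set g : Esp d → ℝ := fun x => (1 - θ) * F x + θ * F x₀ + μ * ‖x - x₀‖ ^ 2 with hgdef
  -- Lipschitz estimate for g on X
  have hglip' : ∀ a ∈ X, ∀ b ∈ X, |g a - g b| ≤ L * dist a b := by
    intro a ha b hb
    have h1 : |‖a - x₀‖ - ‖b - x₀‖| ≤ ‖a - b‖ := by
      have := abs_norm_sub_norm_le (a - x₀) (b - x₀)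
      have he : a - x₀ - (b - x₀) = a - b := by abel
      rwa [he] at this
    have h2 : ‖a - x₀‖ ≤ D := by
      rw [← dist_eq_norm]; exact Metric.dist_le_diam_of_mem hXbdd ha hx₀
    have h3 : ‖b - x₀‖ ≤ D := by
      rw [← dist_eq_norm]; exact Metric.dist_le_diam_of_mem hXbdd hb hx₀
    have hsq : |‖a - x₀‖ ^ 2 - ‖b - x₀‖ ^ 2| ≤ 2 * D * ‖a - b‖ := by
      have h4 := abs_le.1 h1
      rw [abs_le]
      constructor <;> nlinarith [norm_nonneg (a - x₀), norm_nonneg (b - x₀), norm_nonneg (a - b)]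
    have hF4 := abs_le.1 (hFlip a b)
    have hsq4 := abs_le.1 hsq
    have hd : dist a b = ‖a - b‖ := dist_eq_norm a b
    have hgab : g a - g b = (1 - θ) * (F a - F b) + μ * (‖a - x₀‖ ^ 2 - ‖b - x₀‖ ^ 2) := by
      simp only [hgdef]; ring
    rw [hgab, hd]
    rw [hd] at hF4
    have e1 : (1 - θ) * (F a - F b) ≤ (1 - θ) * (L * ‖a - b‖) :=
      mul_le_mul_of_nonneg_left hF4.2 (by linarith)
    have e1' : -((1 - θ) * (L * ‖a - b‖)) ≤ (1 - θ) * (F a - F b) := by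
      have := mul_le_mul_of_nonneg_left hF4.1 (by linarith : (0:ℝ) ≤ 1 - θ)
      nlinarith [this]
    have e2 : μ * (‖a - x₀‖ ^ 2 - ‖b - x₀‖ ^ 2) ≤ μ * (2 * D * ‖a - b‖) :=
      mul_le_mul_of_nonneg_left hsq4.2 hμ0.le
    have e2' : -(μ * (2 * D * ‖a - b‖)) ≤ μ * (‖a - x₀‖ ^ 2 - ‖b - x₀‖ ^ 2) := by
      have := mul_le_mul_of_nonneg_left hsq4.1 hμ0.le
      nlinarith [this]
    have hrel2 : θ * L * ‖a - b‖ = 2 * μ * D * ‖a - b‖ := by rw [hrel]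
    rw [abs_le]
    constructor <;> linarith [e1, e1', e2, e2', hrel2]
  have hgL : LipschitzOnWith (Real.toNNReal L) g X := by
    apply LipschitzOnWith.of_dist_le_mul
    intro a ha b hb
    rw [Real.dist_eq, Real.coe_toNNReal _ hL0.le]
    exact hglip' a ha b hb
  -- the candidate
  have hCL : Real.toNNReal CI * Real.toNNReal L = Real.toNNReal γ := by
    rw [← Real.toNNReal_mul hCI0.le]
    congr 1
    rw [hLdef]
    field_simp
  have hLipIg : LipschitzOnWith (Real.toNNReal γ) (op.I g) X := by
    have := op.lip1 g (Real.toNNReal L) hgL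
    rwa [hCL] at this
  have hgh : ∀ x ∈ X, |g x - op.I g x| ≤ δ * L := by
    intro x hx
    have := op.lip2 g (Real.toNNReal L) hgL x hx
    rwa [Real.coe_toNNReal _ hL0.le] at this
  -- continuity and closure bound
  have hFcont : Continuous F := by
    have : LipschitzWith (Real.toNNReal L) F := by
      apply LipschitzWith.of_dist_le_mul
      intro a b
      rw [Real.dist_eq, Real.coe_toNNReal _ hL0.le]
      exact hFlip a b
    exact this.continuous
  have hgcont : Continuous g := by
    rw [hgdef]
    exact ((continuous_const.mul hFcont).add continuous_const).add
      (continuous_const.mul ((continuous_id.sub continuous_const).norm.pow 2))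
  have hhcont : ContinuousOn (op.I g) (closure X) := op.contE _ (op.mem_E g)
  have hghclos : ∀ w ∈ closure X, |g w - op.I g w| ≤ δ * L := by
    intro w hw
    have hne : (nhdsWithin w X).NeBot := mem_closure_iff_nhdsWithin_neBot.1 hw
    have ht1 : Filter.Tendsto g (nhdsWithin w X) (nhds (g w)) :=
      (hgcont.tendsto w).mono_left nhdsWithin_le_nhds
    have ht2 : Filter.Tendsto (op.I g) (nhdsWithin w X) (nhds (op.I g w)) :=
      (hhcont w hw).mono_left (nhdsWithin_mono w subset_closure)
    have htend : Filter.Tendsto (fun u => |g u - op.I g u|) (nhdsWithin w X)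
        (nhds (|g w - op.I g w|)) := (ht1.sub ht2).abs
    exact le_of_tendsto htend (Filter.eventually_of_mem self_mem_nhdsWithin
      (fun u hu => hgh u hu))
  -- convexity estimate for g
  have hgconv : ∀ (x y : Esp d) (a b : ℝ), 0 ≤ a → 0 ≤ b → a + b = 1 →
      g (a • x + b • y) ≤ a * g x + b * g y - μ * (a * b * ‖x - y‖ ^ 2) := by
    intro x y a b ha hb hab
    have hF := hFconv.2 (mem_univ x) (mem_univ y) ha hb hab
    simp only [smul_eq_mul] at hF
    have hid : a • x + b • y - x₀ = a • (x - x₀) + b • (y - x₀) := by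
      calc a • x + b • y - x₀ = a • x + b • y - (a • x₀ + b • x₀) := by
            rw [← add_smul, hab, one_smul]
        _ = a • (x - x₀) + b • (y - x₀) := by rw [smul_sub, smul_sub]; abel
    have hsq := sq_combo (x - x₀) (y - x₀) a b hab
    have hxy : x - x₀ - (y - x₀) = x - y := by abel
    rw [hxy] at hsq
    simp only [hgdef]
    rw [hid, hsq]
    have hb' : b = 1 - a := by linarith
    subst hb'
    linarith [mul_le_mul_of_nonneg_left hF (by linarith : (0:ℝ) ≤ 1 - θ)]
  -- numeric facts
  have hεne : ε ≠ 0 := ne_of_gt hε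
  have hCIne : CI ≠ 0 := ne_of_gt hCI0
  have hfinal : 2 * δ * L ≤ μ * ε ^ 2 := by
    have e : μ * ε ^ 2 = 4 * δ * γ / CI := by
      rw [hμdef]; field_simp
    have e2 : 2 * δ * L = 2 * δ * γ / CI := by rw [hLdef]; ring
    rw [e, e2, div_le_div_iff₀ hCI0 hCI0]
    nlinarith [mul_pos (mul_pos hδ hγ0) hCI0]
  -- the constraints
  have hMeps : SatisfiesMeps ε U (op.I g) := by
    rintro x y z ⟨p, hp, q, hq, hpq, hx, hy, hz, hxy, hzseg⟩
    have hpc : p ∈ closure X := frontier_subset_closure (hU.1 hp)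
    have hqc : q ∈ closure X := frontier_subset_closure (hU.1 hq)
    have hxc : x ∈ closure X := dseg_mem_closure hXconv hε hpc hqc hpq hx
    have hyc : y ∈ closure X := dseg_mem_closure hXconv hε hpc hqc hpq hy
    have hzc : z ∈ closure X := dseg_mem_closure hXconv hε hpc hqc hpq hz
    have hxyn : (0:ℝ) < ‖x - y‖ := by
      rw [norm_pos_iff]; exact sub_ne_zero.2 hxy
    obtain ⟨a, b, ha, hb, hab, hz'⟩ := hzseg
    have hb' : b = 1 - a := by linarith
    subst hb'
    have hzy : z - y = a • (x - y) := by
      rw [← hz']; module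
    have hzx : z - x = (1 - a) • (y - x) := by
      rw [← hz']; module
    have hay : a * ‖x - y‖ = ‖z - y‖ := by
      rw [hzy, norm_smul, Real.norm_eq_abs, abs_of_nonneg ha]
    have hbx : (1 - a) * ‖x - y‖ = ‖z - x‖ := by
      rw [hzx, norm_smul, Real.norm_eq_abs, abs_of_nonneg (by linarith), norm_sub_rev]
    have hlam : ‖z - y‖ / ‖x - y‖ = a := by
      rw [← hay, mul_div_assoc, div_self (ne_of_gt hxyn), mul_one]
    unfold ellVal
    rw [hlam]
    by_cases hzex : z = x
    · have ha1 : a = 1 := by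
        rw [← hlam, hzex, div_self (ne_of_gt hxyn)]
      rw [hzex, ha1]
      norm_num
    by_cases hzey : z = y
    · have ha0 : a = 0 := by
        rw [← hlam, hzey, sub_self, norm_zero, zero_div]
      rw [hzey, ha0]
      norm_num
    have hεzx : ε ≤ ‖z - x‖ := dseg_dist hε hpq hz hx hzex
    have hεzy : ε ≤ ‖z - y‖ := dseg_dist hε hpq hz hy hzey
    have hεa : ε ≤ a * ‖x - y‖ := by rw [hay]; exact hεzy
    have hεb : ε ≤ (1 - a) * ‖x - y‖ := by rw [hbx]; exact hεzx
    have hprod : ε * ε ≤ (a * ‖x - y‖) * ((1 - a) * ‖x - y‖) :=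
      mul_le_mul hεa hεb hε.le (by positivity)
    have hμprod : μ * (ε * ε) ≤ μ * ((a * ‖x - y‖) * ((1 - a) * ‖x - y‖)) :=
      mul_le_mul_of_nonneg_left hprod hμ0.le
    have hgz := hgconv x y a (1 - a) ha (by linarith) (by ring)
    rw [hz'] at hgz
    have hAz := abs_le.1 (hghclos z hzc)
    have hAx := abs_le.1 (hghclos x hxc)
    have hAy := abs_le.1 (hghclos y hyc)
    have hBx : a * (g x - op.I g x) ≤ a * (δ * L) := mul_le_mul_of_nonneg_left hAx.2 ha
    have hBy : (1 - a) * (g y - op.I g y) ≤ (1 - a) * (δ * L) :=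
      mul_le_mul_of_nonneg_left hAy.2 (by linarith)
    linarith [hAz.1, hBx, hBy, hgz, hμprod, hfinal]
  -- the error estimate
  refine ⟨op.I g, op.mem_E g, hMeps, hLipIg, ?_⟩
  intro x hx
  have hfx : F x = f x := hFeq x hx
  have hd : dist x x₀ ≤ D := Metric.dist_le_diam_of_mem hXbdd hx hx₀
  have hnd : ‖x - x₀‖ ≤ D := by rwa [← dist_eq_norm]
  have hFd := abs_le.1 (hFlip x x₀)
  have hfg : f x - g x = θ * (F x - F x₀) - μ * ‖x - x₀‖ ^ 2 := by
    simp only [hgdef]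
    rw [← hfx]
    ring
  have e1 : θ * (F x - F x₀) ≤ θ * (L * D) := by
    apply mul_le_mul_of_nonneg_left _ hθ0
    nlinarith [hFd.2, mul_le_mul_of_nonneg_left hd hL0.le]
  have e1' : -(θ * (L * D)) ≤ θ * (F x - F x₀) := by
    nlinarith [mul_le_mul_of_nonneg_left hFd.1 hθ0,
      mul_le_mul_of_nonneg_left hd (mul_nonneg hθ0 hL0.le)]
  have e2 : μ * ‖x - x₀‖ ^ 2 ≤ μ * D ^ 2 := by
    apply mul_le_mul_of_nonneg_left _ hμ0.le
    nlinarith [norm_nonneg (x - x₀)]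
  have e2' : 0 ≤ μ * ‖x - x₀‖ ^ 2 := by positivity
  have h1 : |f x - g x| ≤ θ * (L * D) + μ * D ^ 2 := by
    rw [hfg, abs_le]
    constructor <;> nlinarith
  have h2 := hgh x hx
  have h3 : θ * (L * D) + μ * D ^ 2 + δ * L ≤ 7 * γ ^ 2 * δ * D / ε ^ 2 := by
    have key2 : 12 * D ^ 2 + ε ^ 2 ≤ 7 * CI * γ * D := by
      nlinarith [mul_le_mul_of_nonneg_left hDγ hD0.le,
        mul_le_mul hεD hεD hε.le hD0.le,
        mul_nonneg (mul_nonneg (by linarith : (0:ℝ) ≤ CI - 1) hγ0.le) hD0.le]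
    have hLHS : θ * (L * D) + μ * D ^ 2 + δ * L
        = (12 * δ * γ * D ^ 2 + δ * γ * ε ^ 2) / (CI * ε ^ 2) := by
      rw [hθdef, hμdef, hLdef]; field_simp; ring
    rw [hLHS, div_le_div_iff₀ (by positivity) (by positivity)]
    nlinarith [mul_le_mul_of_nonneg_left key2 (by positivity : (0:ℝ) ≤ δ * γ * ε ^ 2)]
  calc |f x - op.I g x| ≤ |f x - g x| + |g x - op.I g x| := by
        have : f x - op.I g x = (f x - g x) + (g x - op.I g x) := by ring
        rw [this]; exact abs_add_le _ _
    _ ≤ 7 * γ ^ 2 * δ * D / ε ^ 2 := by linarith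

end
end

section
/- There is a constant C depending only on the dimension d and on C_I with the following property. Let X be a bounded open convex subset of ℝ^d, let I_δ : C(X) → E_δ be an interpolation operator with constant C_I ≥ 1, let U_ε ⊆ ∂X be a boundary ε-sample with associated discretized constraint set M_ε, and let κ ≥ 1. Assume δ ≤ ε/2, ε ≤ diam(X), and 2κδ² ≤ ε². Then for every convex differentiable function f on X whose gradient is κ-Lipschitz there exists h ∈ E_δ ∩ H_{M_ε} with ‖f − h‖_∞ ≤ C κ² diam(X)² δ²/ε²; in particular d_H(B_{C^{1,1}}^κ ∩ H | E_δ ∩ H_{M_ε}) ≤ C κ² diam(X)² δ²/ε². -/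
open Set NNReal

noncomputable section

lemma combo_norm_sq {d : ℕ} (a b : Esp d) (l : ℝ) :
    ‖l • a + (1 - l) • b‖ ^ 2
      = l * ‖a‖ ^ 2 + (1 - l) * ‖b‖ ^ 2 - l * (1 - l) * ‖a - b‖ ^ 2 := by
  have h : ∀ w : Esp d, ‖w‖ ^ 2 = (inner ℝ w w : ℝ) :=
    fun w => (real_inner_self_eq_norm_sq w).symm
  rw [h, h, h, h]
  simp only [inner_add_left, inner_add_right, inner_sub_left, inner_sub_right,
    real_inner_smul_left, real_inner_smul_right, real_inner_comm a b]
  ring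

lemma discreteSeg_mem_closure {d : ℕ} {X : Set (Esp d)} (hX : Convex ℝ X) {ε : ℝ}
    (hε : 0 < ε) {p q w : Esp d} (hp : p ∈ closure X) (hq : q ∈ closure X)
    (hw : w ∈ discreteSeg ε p q) : w ∈ closure X := by
  obtain ⟨i, hi, rfl⟩ := hw
  by_cases hpq : p = q
  · subst hpq; simpa using hp
  have hn : (0:ℝ) < ‖q - p‖ := by
    rw [norm_pos_iff, sub_ne_zero]; exact fun h => hpq h.symm
  set c : ℝ := ε * i / ‖q - p‖ with hc
  have hc0 : 0 ≤ c := by positivity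
  have hc1 : c ≤ 1 := by
    rw [hc, div_le_one hn]
    calc ε * i ≤ ε * (‖q - p‖ / ε) := by
          apply mul_le_mul_of_nonneg_left hi hε.le
      _ = ‖q - p‖ := by field_simp
  have := (hX.closure) hp hq (by linarith : (0:ℝ) ≤ 1 - c) hc0 (by ring)
  convert this using 1
  module

lemma discreteSeg_dist {d : ℕ} {ε : ℝ} (hε : 0 < ε) {p q x y : Esp d} (hpq : p ≠ q)
    (hx : x ∈ discreteSeg ε p q) (hy : y ∈ discreteSeg ε p q) (hxy : x ≠ y) :
    ε ≤ ‖x - y‖ := by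
  obtain ⟨i, hi, rfl⟩ := hx
  obtain ⟨j, hj, rfl⟩ := hy
  have hn : (0:ℝ) < ‖q - p‖ := by
    rw [norm_pos_iff, sub_ne_zero]; exact fun h => hpq h.symm
  have hij : i ≠ j := by rintro rfl; exact hxy rfl
  have h1 : (1:ℝ) ≤ |(i:ℝ) - (j:ℝ)| := by
    have : ((i:ℤ) - (j:ℤ)) ≠ 0 := by
      simpa [sub_eq_zero] using fun h => hij (by exact_mod_cast h)
    calc (1:ℝ) = ((1:ℤ):ℝ) := by norm_num
      _ ≤ |(((i:ℤ) - (j:ℤ) : ℤ) : ℝ)| := by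
          exact_mod_cast Int.one_le_abs this
      _ = |(i:ℝ) - (j:ℝ)| := by push_cast; ring_nf
  have heq : (p + ((ε * i) / ‖q - p‖) • (q - p)) - (p + ((ε * j) / ‖q - p‖) • (q - p))
      = ((ε * i - ε * j) / ‖q - p‖) • (q - p) := by
    rw [div_eq_mul_inv, div_eq_mul_inv, div_eq_mul_inv]
    module
  rw [heq, norm_smul]
  rw [Real.norm_eq_abs, abs_div, abs_of_pos hn, div_mul_cancel₀ _ hn.ne']
  calc ε = ε * 1 := by ring
    _ ≤ ε * |(i:ℝ) - (j:ℝ)| := by apply mul_le_mul_of_nonneg_left h1 hε.le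
    _ = |ε * i - ε * j| := by
        rw [← mul_sub, abs_mul, abs_of_pos hε]


set_option maxHeartbeats 1000000 in
/-- There is a constant `C = C(d, C_I)` such that: for every bounded open
convex `X ⊆ ℝ^d`, interpolation operator `I_δ : C(X) → E_δ` with constant `C_I ≥ 1`,
boundary `ε`-sample `U_ε ⊆ ∂X` with constraint set `M_ε`, and `κ ≥ 1`, if `δ ≤ ε/2`,
`ε ≤ diam(X)` and `2κδ² ≤ ε²`, then for every convex differentiable `f` on `X` with
`κ`-Lipschitz gradient there is `h ∈ E_δ ∩ H_{M_ε}` with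
`‖f − h‖_∞ ≤ C κ² diam(X)² δ²/ε²`; in particular
`d_H(B_{C^{1,1}}^κ ∩ H | E_δ ∩ H_{M_ε}) ≤ C κ² diam(X)² δ²/ε²`. -/
theorem stmt3 (d : ℕ) (CI : ℝ) (hCI : 1 ≤ CI) : ∃ C : ℝ, 0 < C ∧
    ∀ (X : Set (Esp d)), Convex ℝ X → IsOpen X → Bornology.IsBounded X →
    ∀ δ ε κ : ℝ, 0 < δ → 0 < ε → 1 ≤ κ →
    ∀ op : InterpOp d X δ CI, ∀ U : Set (Esp d), IsBoundarySample X ε U →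
    δ ≤ ε / 2 → ε ≤ Metric.diam X → 2 * κ * δ ^ 2 ≤ ε ^ 2 →
    ∀ (f : Esp d → ℝ) (f' : Esp d → Esp d), ConvexOn ℝ X f →
      (∀ x ∈ X, HasGradientAt f (f' x) x) →
      LipschitzOnWith (Real.toNNReal κ) f' X →
    ∃ h : Esp d → ℝ, h ∈ op.E ∧ SatisfiesMeps ε U h ∧
      ∀ x ∈ X, |f x - h x| ≤ C * κ ^ 2 * Metric.diam X ^ 2 * δ ^ 2 / ε ^ 2 := by
  refine ⟨3, by norm_num, ?_⟩
  intro X hXconv hXopen hXbd δ ε κ hδ hε hκ op U hU hδε hεD h2κ f f' hconv hgrad hlip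
  have hXne : X.Nonempty := by
    rcases X.eq_empty_or_nonempty with rfl | hne
    · simp only [Metric.diam_empty] at hεD; linarith
    · exact hne
  obtain ⟨x₀, hx₀⟩ := hXne
  have hD : 0 < Metric.diam X := lt_of_lt_of_le hε hεD
  set D := Metric.diam X with hDdef
  have hε2 : (0:ℝ) < ε ^ 2 := by positivity
  set t : ℝ := 2 * κ * δ ^ 2 / ε ^ 2 with htdef
  have ht0 : 0 < t := by positivity
  have hδε2 : 4 * δ ^ 2 ≤ ε ^ 2 := by nlinarith
  have htκ : t ≤ κ / 2 := by
    rw [htdef, div_le_iff₀ hε2]; nlinarith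
  have htε : t * ε ^ 2 = 2 * κ * δ ^ 2 := by
    rw [htdef, div_mul_cancel₀ _ hε2.ne']
  set ft : Esp d → ℝ := fun w => f w + t * ‖w - x₀‖ ^ 2 with hftdef
  set ft' : Esp d → Esp d := fun w => f' w + (2 * t) • (w - x₀) with hft'def
  set h : Esp d → ℝ := op.I ft with hhdef
  -- gradient of ft
  have hgradft : ∀ w ∈ X, HasGradientAt ft (ft' w) w := by
    intro w hw
    rw [hasGradientAt_iff_hasFDerivAt]
    have H1 : HasFDerivAt f (InnerProductSpace.toDual ℝ _ (f' w)) w :=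
      hasGradientAt_iff_hasFDerivAt.1 (hgrad w hw)
    have H2 : HasFDerivAt (fun y : Esp d => ‖y - x₀‖ ^ 2)
        (2 • ((innerSL ℝ (w - x₀)).comp (ContinuousLinearMap.id ℝ _))) w :=
      ((hasFDerivAt_id w).sub_const x₀).norm_sq
    have H3 := H1.add (H2.const_mul t)
    refine H3.congr_fderiv ?_
    ext v
    simp only [InnerProductSpace.toDual_apply_apply, ContinuousLinearMap.add_apply,
      ContinuousLinearMap.smul_apply, ContinuousLinearMap.coe_smul', Pi.smul_apply,
      ContinuousLinearMap.coe_comp', Function.comp_apply, ContinuousLinearMap.coe_id', id_eq,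
      innerSL_apply_apply, inner_add_left, real_inner_smul_left, smul_eq_mul, hft'def]
    ring
  -- Lipschitz bound for ft'
  have hlipft' : LipschitzOnWith (Real.toNNReal (κ + 2 * t)) ft' X := by
    rw [lipschitzOnWith_iff_dist_le_mul]
    intro u hu v hv
    have h1 : dist (f' u) (f' v) ≤ κ * dist u v := by
      have := lipschitzOnWith_iff_dist_le_mul.1 hlip u hu v hv
      rwa [Real.coe_toNNReal κ (by linarith)] at this
    have h2 : dist ((2 * t) • (u - x₀)) ((2 * t) • (v - x₀)) = (2 * t) * dist u v := by
      rw [dist_smul₀, Real.norm_eq_abs, abs_of_pos (by linarith)]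
      congr 1
      rw [dist_eq_norm, dist_eq_norm]
      congr 1
      abel
    calc dist (ft' u) (ft' v)
        ≤ dist (f' u) (f' v) + dist ((2 * t) • (u - x₀)) ((2 * t) • (v - x₀)) :=
          dist_add_add_le _ _ _ _
      _ ≤ κ * dist u v + (2 * t) * dist u v := by rw [h2]; linarith
      _ = (Real.toNNReal (κ + 2 * t) : ℝ) * dist u v := by
          rw [Real.coe_toNNReal _ (by linarith)]; ring
  -- interpolation error
  have herr : ∀ w ∈ X, |ft w - h w| ≤ κ * δ ^ 2 := by
    intro w hw
    have := op.lip3 ft ft' (Real.toNNReal (κ + 2 * t)) hgradft hlipft' w hw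
    rw [Real.coe_toNNReal _ (by linarith : (0:ℝ) ≤ κ + 2 * t)] at this
    calc |ft w - h w| ≤ δ ^ 2 / 2 * (κ + 2 * t) := this
      _ ≤ δ ^ 2 / 2 * (2 * κ) := by nlinarith
      _ = κ * δ ^ 2 := by ring
  have hcont : ContinuousOn h (closure X) := op.contE _ (op.mem_E ft)
  -- key convexity estimate at interior points
  have key : ∀ u ∈ X, ∀ v ∈ X, ∀ a : ℝ, 0 ≤ a → a ≤ 1 →
      h (a • u + (1 - a) • v) - a * h u - (1 - a) * h v
        ≤ -(t * (a * (1 - a) * ‖u - v‖ ^ 2)) + 2 * (κ * δ ^ 2) := by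
    intro u hu v hv a ha ha1
    have hb : (0:ℝ) ≤ 1 - a := by linarith
    have hw : a • u + (1 - a) • v ∈ X := hXconv hu hv ha hb (by ring)
    have e1 := abs_le.1 (herr _ hu)
    have e2 := abs_le.1 (herr _ hv)
    have e3 := abs_le.1 (herr _ hw)
    have hconvf : f (a • u + (1 - a) • v) ≤ a * f u + (1 - a) * f v :=
      hconv.2 hu hv ha hb (by ring)
    have hq : ‖(a • u + (1 - a) • v) - x₀‖ ^ 2
        = a * ‖u - x₀‖ ^ 2 + (1 - a) * ‖v - x₀‖ ^ 2 - a * (1 - a) * ‖u - v‖ ^ 2 := by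
      have hrw : (a • u + (1 - a) • v) - x₀ = a • (u - x₀) + (1 - a) • (v - x₀) := by
        module
      have hrw2 : (u - x₀) - (v - x₀) = u - v := by abel
      rw [hrw, combo_norm_sq, hrw2]
    have hftw : ft (a • u + (1 - a) • v)
        = f (a • u + (1 - a) • v) + t * ‖(a • u + (1 - a) • v) - x₀‖ ^ 2 := rfl
    have hftu : ft u = f u + t * ‖u - x₀‖ ^ 2 := rfl
    have hftv : ft v = f v + t * ‖v - x₀‖ ^ 2 := rfl
    have m1 : a * (ft u - κ * δ ^ 2) ≤ a * h u :=
      mul_le_mul_of_nonneg_left (by linarith [e1.1]) ha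
    have m2 : (1 - a) * (ft v - κ * δ ^ 2) ≤ (1 - a) * h v :=
      mul_le_mul_of_nonneg_left (by linarith [e2.1]) hb
    have m3 : h (a • u + (1 - a) • v) ≤ ft (a • u + (1 - a) • v) + κ * δ ^ 2 := by
      linarith [e3.2]
    rw [hftw] at m3
    rw [hftu] at m1
    rw [hftv] at m2
    have hqt : t * ‖(a • u + (1 - a) • v) - x₀‖ ^ 2
        = a * (t * ‖u - x₀‖ ^ 2) + (1 - a) * (t * ‖v - x₀‖ ^ 2)
          - t * (a * (1 - a) * ‖u - v‖ ^ 2) := by rw [hq]; ring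
    ring_nf at m1 m2 m3 hqt ⊢
    linarith [m1, m2, m3, hconvf, hqt]
  -- membership in E
  refine ⟨h, op.mem_E ft, ?_, ?_⟩
  · -- SatisfiesMeps
    rintro x y z ⟨p, hpU, q, hqU, hpq, hx, hy, hz, hxy, hseg⟩
    have hpc : p ∈ closure X := frontier_subset_closure (hU.1 hpU)
    have hqc : q ∈ closure X := frontier_subset_closure (hU.1 hqU)
    have hxc : x ∈ closure X := discreteSeg_mem_closure hXconv hε hpc hqc hx
    have hyc : y ∈ closure X := discreteSeg_mem_closure hXconv hε hpc hqc hy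
    have hzc : z ∈ closure X := discreteSeg_mem_closure hXconv hε hpc hqc hz
    have hxyn : (0:ℝ) < ‖x - y‖ := by
      rw [norm_pos_iff, sub_ne_zero]; exact hxy
    by_cases hzx : z = x
    · subst hzx
      unfold ellVal
      rw [div_self hxyn.ne']
      ring_nf
      exact le_refl 0
    by_cases hzy : z = y
    · subst hzy
      unfold ellVal
      simp
    obtain ⟨a, b, ha, hb, hab, hzab⟩ := hseg
    obtain rfl : b = 1 - a := by linarith
    have ha1 : a ≤ 1 := by linarith
    have hzy' : ‖z - y‖ = a * ‖x - y‖ := by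
      have : z - y = a • (x - y) := by rw [← hzab]; module
      rw [this, norm_smul, Real.norm_eq_abs, abs_of_nonneg ha]
    have hzx' : ‖z - x‖ = (1 - a) * ‖x - y‖ := by
      have : z - x = (1 - a) • (y - x) := by rw [← hzab]; module
      rw [this, norm_smul, Real.norm_eq_abs, abs_of_nonneg hb, norm_sub_rev]
    have hlam : ‖z - y‖ / ‖x - y‖ = a := by
      rw [hzy', mul_div_assoc, div_self hxyn.ne', mul_one]
    have hεzx : ε ≤ ‖z - x‖ := discreteSeg_dist hε hpq hz hx hzx
    have hεzy : ε ≤ ‖z - y‖ := discreteSeg_dist hε hpq hz hy hzy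
    -- limit argument
    have hmemX : ∀ w ∈ closure X, ∀ s ∈ Ioo (0:ℝ) 1, x₀ + s • (w - x₀) ∈ X := by
      intro w hw s hs
      have := hXconv.combo_interior_closure_mem_interior
        (by rwa [hXopen.interior_eq]) hw (by linarith [hs.2] : (0:ℝ) < 1 - s) hs.1.le
        (by ring)
      rw [hXopen.interior_eq] at this
      convert this using 1
      module
    have htend : ∀ w ∈ closure X,
        Filter.Tendsto (fun s : ℝ => h (x₀ + s • (w - x₀))) (nhdsWithin 1 (Iio 1))
          (nhds (h w)) := by
      intro w hw
      have hc : ContinuousWithinAt h (closure X) w := hcont w hw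
      apply hc.tendsto.comp
      rw [tendsto_nhdsWithin_iff]
      constructor
      · have hcn : Filter.Tendsto (fun s : ℝ => x₀ + s • (w - x₀)) (nhds (1:ℝ))
            (nhds (x₀ + (1:ℝ) • (w - x₀))) := by
          exact (continuous_const.add (continuous_id.smul continuous_const)).tendsto 1
        have : x₀ + (1:ℝ) • (w - x₀) = w := by module
        rw [this] at hcn
        exact hcn.mono_left nhdsWithin_le_nhds
      · filter_upwards [Ioo_mem_nhdsLT_of_mem (by norm_num : (1:ℝ) ∈ Ioc (0:ℝ) 1)] with s hs
        exact subset_closure (hmemX w hw s hs)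
    have hsle : ∀ s ∈ Ioo (0:ℝ) 1,
        h (x₀ + s • (z - x₀)) - a * h (x₀ + s • (x - x₀)) - (1 - a) * h (x₀ + s • (y - x₀))
          + t * (a * (1 - a) * (s ^ 2 * ‖x - y‖ ^ 2)) ≤ 2 * (κ * δ ^ 2) := by
      intro s hs
      have hxs := hmemX x hxc s hs
      have hys := hmemX y hyc s hs
      have hzs : x₀ + s • (z - x₀)
          = a • (x₀ + s • (x - x₀)) + (1 - a) • (x₀ + s • (y - x₀)) := by
        rw [← hzab]; module
      have hnorm : ‖(x₀ + s • (x - x₀)) - (x₀ + s • (y - x₀))‖ ^ 2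
          = s ^ 2 * ‖x - y‖ ^ 2 := by
        have : (x₀ + s • (x - x₀)) - (x₀ + s • (y - x₀)) = s • (x - y) := by module
        rw [this, norm_smul, mul_pow, Real.norm_eq_abs, sq_abs]
      have := key _ hxs _ hys a ha ha1
      rw [← hzs, hnorm] at this
      linarith
    have hlim : Filter.Tendsto
        (fun s : ℝ => h (x₀ + s • (z - x₀)) - a * h (x₀ + s • (x - x₀))
          - (1 - a) * h (x₀ + s • (y - x₀)) + t * (a * (1 - a) * (s ^ 2 * ‖x - y‖ ^ 2)))
        (nhdsWithin 1 (Iio 1))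
        (nhds (h z - a * h x - (1 - a) * h y
          + t * (a * (1 - a) * ((1:ℝ) ^ 2 * ‖x - y‖ ^ 2)))) := by
      have hs2 : Filter.Tendsto (fun s : ℝ => s ^ 2) (nhdsWithin 1 (Iio 1))
          (nhds ((1:ℝ) ^ 2)) :=
        ((continuous_pow 2).tendsto 1).mono_left nhdsWithin_le_nhds
      exact (((htend z hzc).sub ((htend x hxc).const_mul a)).sub
        ((htend y hyc).const_mul (1 - a))).add
        ((tendsto_const_nhds.mul (tendsto_const_nhds.mul
          (hs2.mul tendsto_const_nhds))))
    have hfinal : h z - a * h x - (1 - a) * h y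
        + t * (a * (1 - a) * ((1:ℝ) ^ 2 * ‖x - y‖ ^ 2)) ≤ 2 * (κ * δ ^ 2) := by
      refine le_of_tendsto hlim ?_
      filter_upwards [Ioo_mem_nhdsLT_of_mem (by norm_num : (1:ℝ) ∈ Ioc (0:ℝ) 1)] with s hs
      exact hsle s hs
    have habxy : 2 * κ * δ ^ 2 ≤ t * (a * (1 - a) * ‖x - y‖ ^ 2) := by
      have heq : t * (a * (1 - a) * ‖x - y‖ ^ 2) = t * (‖z - y‖ * ‖z - x‖) := by
        rw [hzy', hzx']; ring
      rw [heq, ← htε]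
      have : ε ^ 2 ≤ ‖z - y‖ * ‖z - x‖ := by nlinarith
      exact mul_le_mul_of_nonneg_left this ht0.le
    unfold ellVal
    rw [hlam]
    nlinarith [hfinal, habxy]
  · -- approximation bound
    intro w hw
    have herr' := herr w hw
    have hfe : |f w - ft w| = t * ‖w - x₀‖ ^ 2 := by
      have : f w - ft w = -(t * ‖w - x₀‖ ^ 2) := by simp [hftdef]
      rw [this, abs_neg, abs_of_nonneg (by positivity)]
    have hwD : ‖w - x₀‖ ≤ D := by
      rw [← dist_eq_norm]
      exact Metric.dist_le_diam_of_mem hXbd hw hx₀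
    have h1 : |f w - h w| ≤ t * D ^ 2 + κ * δ ^ 2 := by
      calc |f w - h w| ≤ |f w - ft w| + |ft w - h w| := abs_sub_le _ _ _
        _ ≤ t * D ^ 2 + κ * δ ^ 2 := by
            rw [hfe]
            have : t * ‖w - x₀‖ ^ 2 ≤ t * D ^ 2 := by
              apply mul_le_mul_of_nonneg_left _ ht0.le
              nlinarith [norm_nonneg (w - x₀)]
            linarith
    have h2 : t * D ^ 2 + κ * δ ^ 2 ≤ 3 * κ ^ 2 * D ^ 2 * δ ^ 2 / ε ^ 2 := by
      rw [le_div_iff₀ hε2]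
      have ht' : t * D ^ 2 * ε ^ 2 = 2 * κ * δ ^ 2 * D ^ 2 := by
        rw [htdef]; field_simp
      have hεD2 : ε ^ 2 ≤ D ^ 2 := by nlinarith
      have c1 : κ * δ ^ 2 * ε ^ 2 ≤ κ * δ ^ 2 * D ^ 2 :=
        mul_le_mul_of_nonneg_left hεD2 (by positivity)
      have hκκ : κ ≤ κ ^ 2 := by nlinarith
      have c2 : κ * (3 * δ ^ 2 * D ^ 2) ≤ κ ^ 2 * (3 * δ ^ 2 * D ^ 2) :=
        mul_le_mul_of_nonneg_right hκκ (by positivity)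
      nlinarith [ht', c1, c2]
    linarith


end
end

section
/- There is a constant C depending only on the dimension d with the following property. Let X be a bounded open convex subset of ℝ^d, let ε > 0, and let U_ε ⊆ ∂X be a boundary ε-sample with associated discretized constraint set M_ε. Then for every Lipschitz function g ∈ C(X) satisfying ℓ(g) ≤ 0 for all ℓ ∈ M_ε, the convex envelope ḡ of g satisfies ‖g − ḡ‖_∞ ≤ C · Lip(g) · ε. -/
open Set NNReal

set_option maxHeartbeats 1000000
noncomputable section

/-- The convex envelope of `g` on `X ⊆ ℝ^d`:
`ḡ(x) = inf { ∑_{i=1}^{d+1} λᵢ g(xᵢ) : xᵢ ∈ X, λ ∈ Δ^d, ∑ᵢ λᵢ xᵢ = x }`. -/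
def convEnv {d : ℕ} (X : Set (Esp d)) (g : Esp d → ℝ) (x : Esp d) : ℝ :=
  sInf {t : ℝ | ∃ (p : Fin (d + 1) → Esp d) (l : Fin (d + 1) → ℝ),
    (∀ i, p i ∈ X) ∧ (∀ i, 0 ≤ l i) ∧ (∑ i, l i) = 1 ∧ (∑ i, l i • p i) = x ∧
    t = ∑ i, l i * g (p i)}


lemma stepB {d : ℕ} (S : Set (Esp d)) (hS : Convex ℝ S) (g : Esp d → ℝ) (δ : ℝ) (hδ : 0 ≤ δ)
    (happrox : ∀ u ∈ S, ∀ v ∈ S, ∀ a b : ℝ, 0 ≤ a → 0 ≤ b → a + b = 1 →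
      g (a • u + b • v) ≤ a * g u + b * g v + δ) :
    ∀ n : ℕ, ∀ p : Fin (n+1) → Esp d, ∀ l : Fin (n+1) → ℝ, (∀ i, p i ∈ S) → (∀ i, 0 ≤ l i) →
      (∑ i, l i) = 1 → g (∑ i, l i • p i) ≤ (∑ i, l i * g (p i)) + n * δ := by
  intro n
  induction n with
  | zero =>
    intro p l hp hl hsum
    have h0 : l 0 = 1 := by simpa using hsum
    simp [Fin.sum_univ_one, h0]
  | succ n ih =>
    intro p l hp hl hsum
    set r : ℝ := ∑ j : Fin (n+1), l j.succ with hr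
    have hsum' : l 0 + r = 1 := by rw [hr, ← Fin.sum_univ_succ]; exact hsum
    have hrnn : 0 ≤ r := Finset.sum_nonneg fun j _ => hl j.succ
    rcases eq_or_lt_of_le hrnn with hr0 | hrpos
    · -- all tail weights are zero
      have hz : ∀ j : Fin (n+1), l j.succ = 0 := by
        intro j
        have := (Finset.sum_eq_zero_iff_of_nonneg (fun j _ => hl j.succ)).mp hr0.symm
        exact this j (Finset.mem_univ j)
      have hl0 : l 0 = 1 := by linarith [hsum', hr0]
      have h1 : (∑ i, l i • p i) = p 0 := by
        rw [Fin.sum_univ_succ]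
        simp [hl0, hz]
      have h2 : (∑ i, l i * g (p i)) = g (p 0) := by
        rw [Fin.sum_univ_succ]
        simp [hl0, hz]
      rw [h1, h2]
      nlinarith [hδ]
    · set l' : Fin (n+1) → ℝ := fun j => l j.succ / r with hl'
      set p' : Fin (n+1) → Esp d := fun j => p j.succ with hp'
      have hl'nn : ∀ j, 0 ≤ l' j := fun j => div_nonneg (hl j.succ) hrnn
      have hl'sum : (∑ j, l' j) = 1 := by
        rw [hl']; simp only [← Finset.sum_div]; rw [← hr, div_self (ne_of_gt hrpos)]
      set y : Esp d := ∑ j, l' j • p' j with hy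
      have hyS : y ∈ S :=
        hS.sum_mem (fun j _ => hl'nn j) hl'sum (fun j _ => hp j.succ)
      have hsplit : (∑ i, l i • p i) = l 0 • p 0 + r • y := by
        rw [Fin.sum_univ_succ, hy, Finset.smul_sum]
        congr 1
        refine Finset.sum_congr rfl fun j _ => ?_
        rw [hl', hp', smul_smul, mul_div_cancel₀ _ (ne_of_gt hrpos)]
      have hmain := happrox (p 0) (hp 0) y hyS (l 0) r (hl 0) hrnn hsum'
      have hih := ih p' l' (fun j => hp j.succ) hl'nn hl'sum
      have hrs : r * (∑ j, l' j * g (p' j)) = ∑ j : Fin (n+1), l j.succ * g (p j.succ) := by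
        rw [Finset.mul_sum]
        refine Finset.sum_congr rfl fun j _ => ?_
        rw [hl', hp']; field_simp
      have hexp : (∑ i, l i * g (p i)) = l 0 * g (p 0) + ∑ j : Fin (n+1), l j.succ * g (p j.succ) :=
        Fin.sum_univ_succ _
      rw [hsplit, hexp]
      have hy2 : r * g y ≤ r * ((∑ j, l' j * g (p' j)) + n * δ) :=
        mul_le_mul_of_nonneg_left hih hrnn
      have hrle : r ≤ 1 := by linarith [hl 0]
      have : r * ((∑ j, l' j * g (p' j)) + n * δ) = (∑ j : Fin (n+1), l j.succ * g (p j.succ)) + r * (n*δ) := by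
        rw [mul_add, hrs]
      rw [this] at hy2
      have hnd : r * (n * δ) ≤ n * δ := by
        have h01 : 0 ≤ (1 - r) * ((n:ℝ) * δ) :=
          mul_nonneg (by linarith) (mul_nonneg (Nat.cast_nonneg n) hδ)
        nlinarith [h01]
      push_cast
      nlinarith [hmain, hy2, hnd]

lemma stepA {d : ℕ} {X : Set (Esp d)} (hXconv : Convex ℝ X) (hXopen : IsOpen X)
    (hXbdd : Bornology.IsBounded X) {ε : ℝ} (hε : 0 < ε) {U : Set (Esp d)}
    (hU : IsBoundarySample X ε U) {g : Esp d → ℝ} {L : ℝ≥0}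
    (hg : LipschitzOnWith L g (closure X)) (hsat : SatisfiesMeps ε U g) :
    ∀ u ∈ closure X, ∀ v ∈ closure X, ∀ a b : ℝ, 0 ≤ a → 0 ≤ b → a + b = 1 →
      g (a • u + b • v) ≤ a * g u + b * g v + 14 * L * ε := by
  intro u hu v hv a b ha hb hab
  have hab' : a = 1 - b := by linarith only [hab]
  subst hab'
  have hb1 : b ≤ 1 := by linarith only [ha]
  have hL : (0:ℝ) ≤ L := L.coe_nonneg
  have hLε : (0:ℝ) ≤ (L:ℝ) * ε := mul_nonneg hL hε.le
  have hlip : ∀ s ∈ closure X, ∀ t ∈ closure X, |g s - g t| ≤ (L:ℝ) * ‖s - t‖ := by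
    intro s hs t ht
    have := hg.dist_le_mul s hs t ht
    rwa [Real.dist_eq, dist_eq_norm] at this
  set z : Esp d := (1-b) • u + b • v with hzdef
  have hzcl : z ∈ closure X := (hXconv.closure) hu hv (by linarith only [hb1]) hb (by ring)
  set w : Esp d := v - u with hwdef
  set n : ℝ := ‖w‖ with hndef
  have hn0 : 0 ≤ n := norm_nonneg _
  have hzu : z - u = b • w := by rw [hzdef, hwdef]; module
  have hzv : z - v = -((1-b) • w) := by rw [hzdef, hwdef]; module
  have hznu : ‖z - u‖ = b * n := by rw [hzu, norm_smul, Real.norm_eq_abs, abs_of_nonneg hb]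
  have hznv : ‖z - v‖ = (1-b) * n := by
    rw [hzv, norm_neg, norm_smul, Real.norm_eq_abs, abs_of_nonneg (by linarith only [hb1])]
  by_cases hsmall : n ≤ 5 * ε
  · -- Lipschitz trivial case
    have h1 : |g z - g u| ≤ (L:ℝ) * (b * n) := by rw [← hznu]; exact hlip z hzcl u hu
    have h2 : |g z - g v| ≤ (L:ℝ) * ((1-b) * n) := by rw [← hznv]; exact hlip z hzcl v hv
    have e1 : g z - g u ≤ (L:ℝ) * (b * n) := le_trans (le_abs_self _) h1
    have e2 : g z - g v ≤ (L:ℝ) * ((1-b) * n) := le_trans (le_abs_self _) h2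
    have e3 : (1-b) * (g z - g u) ≤ (1-b) * ((L:ℝ) * (b * n)) :=
      mul_le_mul_of_nonneg_left e1 (by linarith only [hb1])
    have e4 : b * (g z - g v) ≤ b * ((L:ℝ) * ((1-b) * n)) :=
      mul_le_mul_of_nonneg_left e2 hb
    have hLn : 0 ≤ (L:ℝ) * n := mul_nonneg hL hn0
    have h5 : (L:ℝ) * n ≤ (L:ℝ) * (5 * ε) := mul_le_mul_of_nonneg_left hsmall hL
    have hbb : (0:ℝ) ≤ 1 - b * (1 - b) := by linarith only [hb1, sq_nonneg b]
    have hfin : (1-b) * ((L:ℝ) * (b * n)) + b * ((L:ℝ) * ((1-b) * n)) ≤ 14 * (L:ℝ) * ε := by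
      linarith only [mul_nonneg hbb hLn, h5, hLε]
    linarith only [e3, e4, hfin]
  · push_neg at hsmall
    have hnpos : 0 < n := by linarith only [hsmall, hε]
    set S : Set ℝ := {t : ℝ | u + t • w ∈ closure X} with hSdef
    have h0S : (0:ℝ) ∈ S := by simp [hSdef, hu]
    have h1S : (1:ℝ) ∈ S := by
      simp only [hSdef, mem_setOf_eq, one_smul, hwdef]
      convert hv using 2; abel
    obtain ⟨R, hR⟩ := isBounded_iff_forall_norm_le.mp hXbdd.closure
    have hSbdd : ∀ t ∈ S, |t| ≤ (R + ‖u‖) / n := by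
      intro t ht
      have h1 : ‖u + t • w‖ ≤ R := hR _ ht
      have h2 : ‖t • w‖ ≤ ‖u + t • w‖ + ‖u‖ := by
        have := norm_sub_le (u + t • w) u
        simpa using this
      rw [norm_smul, Real.norm_eq_abs, ← hndef] at h2
      rw [le_div_iff₀ hnpos]
      linarith only [h1, h2]
    have hSba : BddAbove S := ⟨(R + ‖u‖) / n, fun t ht => le_trans (le_abs_self t) (hSbdd t ht)⟩
    have hSbb : BddBelow S := ⟨-((R + ‖u‖) / n), fun t ht => by
      have h := abs_le.mp (hSbdd t ht); linarith only [h.1]⟩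
    have hScl : IsClosed S := by
      have hc : Continuous (fun t : ℝ => u + t • w) :=
        continuous_const.add (continuous_id.smul continuous_const)
      exact isClosed_closure.preimage hc
    set T : ℝ := sSup S with hTdef
    set T' : ℝ := sInf S with hT'def
    have hTS : T ∈ S := hScl.csSup_mem ⟨0, h0S⟩ hSba
    have hT'S : T' ∈ S := hScl.csInf_mem ⟨0, h0S⟩ hSbb
    have hT1 : 1 ≤ T := le_csSup hSba h1S
    have hT'0 : T' ≤ 0 := csInf_le hSbb h0S
    set D : ℝ := T - T' with hDdef
    have hD1 : 1 ≤ D := by rw [hDdef]; linarith only [hT1, hT'0]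
    have hDpos : 0 < D := by linarith only [hD1]
    set p₀ : Esp d := u + T' • w with hp₀def
    set q₀ : Esp d := u + T • w with hq₀def
    have hfr : frontier X = closure X \ X := by rw [frontier, hXopen.interior_eq]
    have hp₀f : p₀ ∈ frontier X := by
      rw [hfr]
      refine ⟨hT'S, fun hmem => ?_⟩
      obtain ⟨r, hr, hball⟩ := Metric.isOpen_iff.mp hXopen p₀ hmem
      have hrn : 0 < r / (2*n) := by positivity
      have hmem2 : u + (T' - r / (2*n)) • w ∈ X := by
        apply hball
        rw [Metric.mem_ball, dist_eq_norm]
        have hee : u + (T' - r / (2*n)) • w - p₀ = (-(r/(2*n))) • w := by rw [hp₀def]; module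
        rw [hee, norm_smul, Real.norm_eq_abs, ← hndef, abs_neg, abs_of_nonneg hrn.le]
        have heq : r / (2*n) * n = r / 2 := by field_simp
        rw [heq]
        linarith only [hr]
      have hmemS : (T' - r / (2*n)) ∈ S := subset_closure hmem2
      have hle := csInf_le hSbb hmemS
      rw [← hT'def] at hle
      linarith only [hle, hrn]
    have hq₀f : q₀ ∈ frontier X := by
      rw [hfr]
      refine ⟨hTS, fun hmem => ?_⟩
      obtain ⟨r, hr, hball⟩ := Metric.isOpen_iff.mp hXopen q₀ hmem
      have hrn : 0 < r / (2*n) := by positivity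
      have hmem2 : u + (T + r / (2*n)) • w ∈ X := by
        apply hball
        rw [Metric.mem_ball, dist_eq_norm]
        have hee : u + (T + r / (2*n)) • w - q₀ = (r/(2*n)) • w := by rw [hq₀def]; module
        rw [hee, norm_smul, Real.norm_eq_abs, ← hndef, abs_of_nonneg hrn.le]
        have heq : r / (2*n) * n = r / 2 := by field_simp
        rw [heq]
        linarith only [hr]
      have hmemS : (T + r / (2*n)) ∈ S := subset_closure hmem2
      have hle := le_csSup hSba hmemS
      rw [← hTdef] at hle
      linarith only [hle, hrn]
    obtain ⟨p, hpU, hpp₀⟩ := hU.2 p₀ hp₀f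
    obtain ⟨q, hqU, hqq₀⟩ := hU.2 q₀ hq₀f
    have hpcl : p ∈ closure X := by
      have := hU.1 hpU; rw [hfr] at this; exact this.1
    have hqcl : q ∈ closure X := by
      have := hU.1 hqU; rw [hfr] at this; exact this.1
    set N : ℝ := ‖q - p‖ with hNdef
    have hq₀p₀ : ‖q₀ - p₀‖ = D * n := by
      have hee : q₀ - p₀ = D • w := by rw [hq₀def, hp₀def, hDdef]; module
      rw [hee, norm_smul, Real.norm_eq_abs, abs_of_pos hDpos, hndef]
    have hNge : D * n - 2 * ε ≤ N := by
      have htri : ‖q₀ - p₀‖ ≤ ‖q₀ - q‖ + ‖q - p‖ + ‖p - p₀‖ := by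
        have h1 : q₀ - p₀ = (q₀ - q) + (q - p) + (p - p₀) := by abel
        rw [h1]
        exact le_trans (norm_add_le _ _) (by gcongr; exact norm_add_le _ _)
      rw [hq₀p₀] at htri
      have h3 : ‖p - p₀‖ ≤ ε := by rw [norm_sub_rev]; exact hpp₀
      linarith only [htri, hqq₀, h3]
    have hDn : n ≤ D * n := by
      have := mul_nonneg (sub_nonneg.mpr hD1) hn0
      linarith only [this]
    have hNpos : 0 < N := by linarith only [hNge, hDn, hsmall, hε]
    have hpq : p ≠ q := by
      intro h
      rw [h, sub_self, norm_zero] at hNdef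
      exact hNpos.ne' hNdef
    set gp : ℕ → Esp d := fun i => p + ((ε * i) / N) • (q - p) with hgpdef
    have hgpsub : ∀ A B : ℝ, (p + (A/N) • (q-p)) - (p + (B/N) • (q-p)) = ((A-B)/N) • (q-p) := by
      intro A B
      rw [← div_sub_div_same, sub_smul]
      module
    have hgen : ∀ m : ℝ, p + ((m*N)/N) • (q-p) = (1-m) • p + m • q := by
      intro m
      rw [mul_div_assoc, div_self (ne_of_gt hNpos), mul_one]
      module
    set idx : ℝ → ℕ := fun t => ⌊((t - T') * N) / (D * ε)⌋₊ with hidxdef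
    have hfloor : ∀ t, T' ≤ t → t ≤ T →
        (idx t : ℝ) * ε ≤ ((t - T') / D) * N ∧ ((t - T') / D) * N < (idx t) * ε + ε ∧
        (idx t : ℝ) ≤ N / ε := by
      intro t ht1 ht2
      have harg : ((t - T') * N) / (D * ε) = (((t - T') / D) * N) / ε := by
        field_simp
      have hfl : (idx t : ℝ) ≤ (((t - T') / D) * N) / ε := by
        rw [hidxdef]; simp only; rw [harg]
        exact Nat.floor_le (div_nonneg (mul_nonneg (div_nonneg (by linarith only [ht1])
          hDpos.le) hNpos.le) hε.le)
      have hfl2 : (((t - T') / D) * N) / ε < (idx t : ℝ) + 1 := by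
        rw [hidxdef]; simp only; rw [harg]
        exact Nat.lt_floor_add_one _
      refine ⟨?_, ?_, ?_⟩
      · calc (idx t : ℝ) * ε ≤ ((((t - T') / D) * N) / ε) * ε :=
              mul_le_mul_of_nonneg_right hfl hε.le
          _ = ((t - T') / D) * N := div_mul_cancel₀ _ (ne_of_gt hε)
      · have h := mul_lt_mul_of_pos_right hfl2 hε
        calc ((t - T') / D) * N = ((((t - T') / D) * N) / ε) * ε :=
              (div_mul_cancel₀ _ (ne_of_gt hε)).symm
          _ < ((idx t : ℝ) + 1) * ε := h
          _ = (idx t) * ε + ε := by ring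
      · have hmu : (t - T') / D ≤ 1 := by
          rw [div_le_one hDpos]; linarith only [ht2, hDdef]
        have hmuN : ((t - T') / D) * N ≤ N := by
          have := mul_nonneg (sub_nonneg.mpr hmu) hNpos.le
          linarith only [this]
        exact le_trans hfl (div_le_div_of_nonneg_right hmuN hε.le) |>.trans (le_refl _)
    have hmono : ∀ t₁ t₂, T' ≤ t₁ → t₁ ≤ t₂ → idx t₁ ≤ idx t₂ := by
      intro t₁ t₂ h1 h2
      apply Nat.floor_mono
      apply div_le_div_of_nonneg_right _ (by positivity)
      have := mul_nonneg (sub_nonneg.mpr h2) hNpos.le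
      linarith only [this]
    have hgrid : ∀ t, T' ≤ t → t ≤ T → ‖(u + t • w) - gp (idx t)‖ ≤ 2 * ε := by
      intro t ht1 ht2
      set μ : ℝ := (t - T') / D with hμdef
      have hμ0 : 0 ≤ μ := div_nonneg (by linarith only [ht1]) hDpos.le
      have hμ1 : μ ≤ 1 := by rw [hμdef, div_le_one hDpos]; linarith only [ht2, hDdef]
      have hpt : u + t • w = (1 - μ) • p₀ + μ • q₀ := by
        rw [hp₀def, hq₀def]
        have htt : t = T' + μ * D := by rw [hμdef]; field_simp; ring
        rw [htt]; module
      set c : Esp d := p + ((μ * N) / N) • (q - p) with hcdef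
      have hc1 : ‖(u + t • w) - c‖ ≤ ε := by
        have hcc : c = (1 - μ) • p + μ • q := hgen μ
        rw [hpt, hcc]
        have hdd : (1 - μ) • p₀ + μ • q₀ - ((1 - μ) • p + μ • q)
            = (1 - μ) • (p₀ - p) + μ • (q₀ - q) := by module
        rw [hdd]
        calc ‖(1 - μ) • (p₀ - p) + μ • (q₀ - q)‖
            ≤ ‖(1 - μ) • (p₀ - p)‖ + ‖μ • (q₀ - q)‖ := norm_add_le _ _
          _ = (1 - μ) * ‖p₀ - p‖ + μ * ‖q₀ - q‖ := by
              rw [norm_smul, norm_smul, Real.norm_eq_abs, Real.norm_eq_abs,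
                abs_of_nonneg (by linarith only [hμ1]), abs_of_nonneg hμ0]
          _ ≤ (1 - μ) * ε + μ * ε := by
              refine add_le_add (mul_le_mul_of_nonneg_left hpp₀ (by linarith only [hμ1]))
                (mul_le_mul_of_nonneg_left hqq₀ hμ0)
          _ = ε := by ring
      have hc2 : ‖c - gp (idx t)‖ ≤ ε := by
        have hdd : c - gp (idx t) = ((μ * N - ε * (idx t)) / N) • (q - p) := by
          rw [hcdef, hgpdef]; exact hgpsub (μ * N) (ε * (idx t))
        rw [hdd, norm_smul, Real.norm_eq_abs, ← hNdef, abs_div,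
          abs_of_pos hNpos, div_mul_cancel₀ _ (ne_of_gt hNpos)]
        obtain ⟨hf1, hf2, _⟩ := hfloor t ht1 ht2
        rw [abs_le]
        constructor
        · rw [hμdef]; linarith only [hf1, hε]
        · rw [hμdef]; linarith only [hf2]
      calc ‖(u + t • w) - gp (idx t)‖ ≤ ‖(u + t • w) - c‖ + ‖c - gp (idx t)‖ := by
            have hee : (u + t • w) - gp (idx t) = ((u + t • w) - c) + (c - gp (idx t)) := by abel
            rw [hee]; exact norm_add_le _ _
        _ ≤ ε + ε := add_le_add hc1 hc2
        _ = 2 * ε := by ring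
    have hgpseg : ∀ i : ℕ, (i : ℝ) ≤ N / ε → gp i ∈ discreteSeg ε p q :=
      fun i hi => ⟨i, hi, rfl⟩
    have hgpcl : ∀ i : ℕ, (i : ℝ) ≤ N / ε → gp i ∈ closure X := by
      intro i hi
      set c : ℝ := (ε * i) / N with hcdef
      have hc0 : 0 ≤ c := by positivity
      have hc1 : c ≤ 1 := by
        rw [hcdef, div_le_one hNpos]
        rw [le_div_iff₀ hε] at hi
        linarith only [hi]
      have hee : gp i = (1 - c) • p + c • q := by rw [hgpdef]; simp only [← hcdef]; module
      rw [hee]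
      exact (hXconv.closure) hpcl hqcl (by linarith only [hc1]) hc0 (by ring)
    have hgpnorm : ∀ i j : ℕ, ‖gp i - gp j‖ = |ε * (i:ℝ) - ε * (j:ℝ)| := by
      intro i j
      have hee : gp i - gp j = ((ε * i - ε * j) / N) • (q - p) := by
        rw [hgpdef]; exact hgpsub (ε * i) (ε * j)
      rw [hee, norm_smul, Real.norm_eq_abs, ← hNdef, abs_div, abs_of_pos hNpos,
        div_mul_cancel₀ _ (ne_of_gt hNpos)]
    have hT'0' : T' ≤ 0 := hT'0
    have h0T : (0:ℝ) ≤ T := by linarith only [hT1]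
    have hbT' : T' ≤ b := by linarith only [hT'0, hb]
    have hT'1 : T' ≤ (1:ℝ) := by linarith only [hT'0]
    have hbT : b ≤ T := by linarith only [hb1, hT1]
    set i0 : ℕ := idx 0 with hi0def
    set ib : ℕ := idx b with hibdef
    set i1 : ℕ := idx 1 with hi1def
    have hm1 : i0 ≤ ib := hmono 0 b hT'0' hb
    have hm2 : ib ≤ i1 := hmono b 1 hbT' hb1
    have hcm1 : (i0:ℝ) ≤ ib := Nat.cast_le.mpr hm1
    have hcm2 : (ib:ℝ) ≤ i1 := Nat.cast_le.mpr hm2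
    obtain ⟨hf00, hf01, hf0N⟩ := hfloor 0 hT'0' h0T
    obtain ⟨hfb0, hfb1, hfbN⟩ := hfloor b hbT' hbT
    obtain ⟨hf10, hf11, hf1N⟩ := hfloor 1 hT'1 hT1
    have hND : 3 * ε * D < N := by
      have hx : 0 < (n - 5*ε) * D := mul_pos (by linarith only [hsmall]) hDpos
      have h2ε : 0 ≤ 2 * ε * (D - 1) := mul_nonneg (by positivity) (by linarith only [hD1])
      linarith only [hNge, hx, h2ε, hε]
    have hsep : (i0:ℝ) * ε + 2 * ε < (i1:ℝ) * ε := by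
      have e0 : ((0:ℝ) - T') / D * N = (-T' / D) * N := by ring_nf
      have e1 : ((1:ℝ) - T') / D * N = (-T' / D) * N + N / D := by field_simp; ring
      rw [e0] at hf00 hf01
      rw [e1] at hf10 hf11
      have hNDd : 3 * ε < N / D := by rw [lt_div_iff₀ hDpos]; linarith only [hND]
      linarith only [hf00, hf11, hNDd]
    have hi01 : (i0:ℝ) < i1 := by
      have h := (mul_lt_mul_iff_left₀ hε).mp (show (i0:ℝ)*ε < (i1:ℝ)*ε by linarith only [hsep, hε])
      exact h
    have hdenom : (0:ℝ) < (i1:ℝ) - i0 := by linarith only [hi01]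
    set θ : ℝ := ((ib:ℝ) - i0) / ((i1:ℝ) - i0) with hθdef
    have hθ0 : 0 ≤ θ := div_nonneg (by linarith only [hcm1]) hdenom.le
    have hθ1 : θ ≤ 1 := by
      rw [hθdef, div_le_one hdenom]
      linarith only [hcm2]
    have hθmul : θ * ((i1:ℝ) - i0) = (ib:ℝ) - i0 := div_mul_cancel₀ _ (ne_of_gt hdenom)
    have hnum : (1-θ) * (ε*(i0:ℝ)) + θ * (ε*(i1:ℝ)) = ε * (ib:ℝ) := by
      linear_combination ε * hθmul
    have hcoef : (1-θ) * ((ε*(i0:ℝ))/N) + θ * ((ε*(i1:ℝ))/N) = (ε*(ib:ℝ))/N := by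
      rw [mul_div_assoc', mul_div_assoc', ← add_div, hnum]
    have hseg : gp ib ∈ segment ℝ (gp i0) (gp i1) := by
      refine ⟨1 - θ, θ, by linarith only [hθ1], hθ0, by ring, ?_⟩
      have hv1 : (1-θ) • gp i0 + θ • gp i1
          = p + ((1-θ) * ((ε*(i0:ℝ))/N) + θ * ((ε*(i1:ℝ))/N)) • (q - p) := by
        rw [hgpdef]; simp only; module
      rw [hv1, hcoef, hgpdef]
    have hposed : 0 < ε * ((i1:ℝ) - i0) := mul_pos hε hdenom
    have hne01 : gp i0 ≠ gp i1 := by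
      intro h
      have hz0 := hgpnorm i0 i1
      rw [h, sub_self, norm_zero] at hz0
      have h2 : |ε * (i0:ℝ) - ε * (i1:ℝ)| = ε * ((i1:ℝ) - i0) := by
        rw [abs_sub_comm, abs_of_nonneg (by linarith only [hposed])]; ring
      rw [h2] at hz0
      linarith only [hz0, hposed]
    have hmem : MemMeps ε U (gp i0) (gp i1) (gp ib) :=
      ⟨p, hpU, q, hqU, hpq, hgpseg i0 hf0N, hgpseg i1 hf1N, hgpseg ib hfbN, hne01, hseg⟩
    have hcon := hsat _ _ _ hmem
    rw [ellVal] at hcon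
    have hnorm1 : ‖gp ib - gp i1‖ = ε * ((i1:ℝ) - ib) := by
      rw [hgpnorm, abs_sub_comm, abs_of_nonneg (by
        have := mul_le_mul_of_nonneg_left hcm2 hε.le
        linarith only [this])]
      ring
    have hnorm2 : ‖gp i0 - gp i1‖ = ε * ((i1:ℝ) - i0) := by
      rw [hgpnorm, abs_sub_comm, abs_of_nonneg (by linarith only [hposed])]
      ring
    have hlam : ‖gp ib - gp i1‖ / ‖gp i0 - gp i1‖ = 1 - θ := by
      rw [hnorm1, hnorm2, hθdef]
      field_simp
      ring
    rw [hlam] at hcon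
    have hkey : g (gp ib) ≤ (1 - θ) * g (gp i0) + θ * g (gp i1) := by linarith only [hcon]
    have hu' : u + (0:ℝ) • w = u := by simp
    have hv' : u + (1:ℝ) • w = v := by rw [one_smul, hwdef]; abel
    have hz' : u + b • w = z := by
      have hh := hzu; rw [sub_eq_iff_eq_add] at hh; rw [hh]; abel
    have hd0 : ‖u - gp i0‖ ≤ 2 * ε := by
      have := hgrid 0 hT'0' h0T; rwa [hu'] at this
    have hd1 : ‖v - gp i1‖ ≤ 2 * ε := by
      have := hgrid 1 hT'1 hT1; rwa [hv'] at this
    have hdb : ‖z - gp ib‖ ≤ 2 * ε := by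
      have := hgrid b hbT' hbT; rwa [hz'] at this
    have hcl0 := hgpcl i0 hf0N
    have hcl1 := hgpcl i1 hf1N
    have hclb := hgpcl ib hfbN
    set A : ℝ := ‖gp i1 - gp i0‖ with hAdef
    have hA : A = ε * ((i1:ℝ) - i0) := by
      rw [hAdef, hgpnorm, abs_of_nonneg (by linarith only [hposed])]; ring
    have hθA : θ * A = ‖gp ib - gp i0‖ := by
      rw [hgpnorm, abs_of_nonneg (by
        have := mul_le_mul_of_nonneg_left hcm1 hε.le
        linarith only [this]), hA]
      linear_combination ε * hθmul
    have hnA : |n - A| ≤ 4 * ε := by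
      have h1 : |‖w‖ - ‖gp i1 - gp i0‖| ≤ ‖w - (gp i1 - gp i0)‖ := abs_norm_sub_norm_le _ _
      have h2 : w - (gp i1 - gp i0) = (v - gp i1) - (u - gp i0) := by rw [hwdef]; abel
      rw [h2] at h1
      have h3 : ‖(v - gp i1) - (u - gp i0)‖ ≤ ‖v - gp i1‖ + ‖u - gp i0‖ := norm_sub_le _ _
      rw [hndef, hAdef]
      linarith only [h1, h3, hd0, hd1]
    have hθAbn : |θ * A - b * n| ≤ 4 * ε := by
      rw [hθA, ← hznu]
      have h1 : |‖gp ib - gp i0‖ - ‖z - u‖| ≤ ‖(gp ib - gp i0) - (z - u)‖ :=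
        abs_norm_sub_norm_le _ _
      have h2 : (gp ib - gp i0) - (z - u) = -(z - gp ib) + (u - gp i0) := by abel
      rw [h2] at h1
      have h3 : ‖(-(z - gp ib)) + (u - gp i0)‖ ≤ ‖z - gp ib‖ + ‖u - gp i0‖ := by
        refine le_trans (norm_add_le _ _) ?_
        rw [norm_neg]
      linarith only [h1, h3, hdb, hd0]
    have hθbn : |θ - b| * n ≤ 8 * ε := by
      have h1 : |θ - b| * n = |θ * n - b * n| := by
        rw [← sub_mul, abs_mul, abs_of_nonneg hn0]
      rw [h1]
      have h2 : |θ * n - θ * A| ≤ 4 * ε := by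
        rw [← mul_sub, abs_mul, abs_of_nonneg hθ0]
        calc θ * |n - A| ≤ 1 * |n - A| := mul_le_mul_of_nonneg_right hθ1 (abs_nonneg _)
          _ = |n - A| := by ring
          _ ≤ 4 * ε := hnA
      calc |θ * n - b * n| ≤ |θ * n - θ * A| + |θ * A - b * n| := abs_sub_le _ _ _
        _ ≤ 4 * ε + 4 * ε := add_le_add h2 hθAbn
        _ = 8 * ε := by ring
    have lz : |g z - g (gp ib)| ≤ (L:ℝ) * (2*ε) :=
      le_trans (hlip z hzcl (gp ib) hclb) (mul_le_mul_of_nonneg_left hdb hL)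
    have lu : |g (gp i0) - g u| ≤ (L:ℝ) * (2*ε) := by
      refine le_trans (hlip (gp i0) hcl0 u hu) ?_
      rw [norm_sub_rev]
      exact mul_le_mul_of_nonneg_left hd0 hL
    have lv : |g (gp i1) - g v| ≤ (L:ℝ) * (2*ε) := by
      refine le_trans (hlip (gp i1) hcl1 v hv) ?_
      rw [norm_sub_rev]
      exact mul_le_mul_of_nonneg_left hd1 hL
    have luv : |g v - g u| ≤ (L:ℝ) * n := by
      refine le_trans (hlip v hv u hu) ?_
      rw [← hwdef, ← hndef]
    have e1 : g z ≤ g (gp ib) + (L:ℝ) * (2*ε) := by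
      have h := le_trans (le_abs_self _) lz; linarith only [h]
    have e3 : g (gp i0) ≤ g u + (L:ℝ) * (2*ε) := by
      have h := le_trans (le_abs_self _) lu; linarith only [h]
    have e4 : g (gp i1) ≤ g v + (L:ℝ) * (2*ε) := by
      have h := le_trans (le_abs_self _) lv; linarith only [h]
    have e34 : (1 - θ) * g (gp i0) + θ * g (gp i1) ≤ (1-θ) * g u + θ * g v + (L:ℝ)*(2*ε) := by
      have E3 := mul_le_mul_of_nonneg_left e3 (show (0:ℝ) ≤ 1-θ by linarith only [hθ1])
      have E4 := mul_le_mul_of_nonneg_left e4 hθ0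
      linarith only [E3, E4]
    have e5 : (θ - b) * (g v - g u) ≤ (L:ℝ) * (8 * ε) := by
      calc (θ - b) * (g v - g u) ≤ |(θ - b) * (g v - g u)| := le_abs_self _
        _ = |θ - b| * |g v - g u| := abs_mul _ _
        _ ≤ |θ - b| * ((L:ℝ) * n) := mul_le_mul_of_nonneg_left luv (abs_nonneg _)
        _ = (|θ - b| * n) * L := by ring
        _ ≤ (8 * ε) * L := mul_le_mul_of_nonneg_right hθbn hL
        _ = (L:ℝ) * (8 * ε) := by ring
    have e6 : (1-θ) * g u + θ * g v ≤ (1-b) * g u + b * g v + (L:ℝ) * (8*ε) := by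
      linarith only [e5]
    linarith only [e1, hkey, e34, e6, hLε]
/-- There is a constant `C = C(d)` such that for every bounded open convex
`X ⊆ ℝ^d`, every `ε > 0`, every boundary `ε`-sample `U ⊆ ∂X` with constraint set `M_ε`,
and every Lipschitz `g ∈ C(X)` satisfying `ℓ(g) ≤ 0` for all `ℓ ∈ M_ε`, the convex envelope
`ḡ` of `g` satisfies `‖g − ḡ‖_∞ ≤ C · Lip(g) · ε`. -/

theorem stmt4 (d : ℕ) : ∃ C : ℝ, 0 < C ∧
    ∀ (X : Set (Esp d)), Convex ℝ X → IsOpen X → Bornology.IsBounded X →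
    ∀ ε : ℝ, 0 < ε → ∀ U : Set (Esp d), IsBoundarySample X ε U →
    ∀ (g : Esp d → ℝ) (L : ℝ≥0), LipschitzOnWith L g (closure X) →
    SatisfiesMeps ε U g →
    ∀ x ∈ X, |g x - convEnv X g x| ≤ C * L * ε := by
  refine ⟨14 * d + 1, by positivity, ?_⟩
  intro X hXconv hXopen hXbdd ε hε U hU g L hg hsat x hx
  have hL : (0:ℝ) ≤ L := L.coe_nonneg
  have hLε : (0:ℝ) ≤ (L:ℝ) * ε := mul_nonneg hL hε.le
  set δ : ℝ := 14 * L * ε with hδdef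
  have hδ0 : 0 ≤ δ := by positivity
  have hA := stepA hXconv hXopen hXbdd hε hU hg hsat
  have hB := stepB (closure X) hXconv.closure g δ hδ0 hA d
  set Tset : Set ℝ := {t : ℝ | ∃ (p : Fin (d + 1) → Esp d) (l : Fin (d + 1) → ℝ),
    (∀ i, p i ∈ X) ∧ (∀ i, 0 ≤ l i) ∧ (∑ i, l i) = 1 ∧ (∑ i, l i • p i) = x ∧
    t = ∑ i, l i * g (p i)} with hTsetdef
  have hxcl : x ∈ closure X := subset_closure hx
  -- every element of Tset is ≥ g x - d * δ
  have hlb : ∀ t ∈ Tset, g x - d * δ ≤ t := by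
    rintro t ⟨p, l, hp, hl, hsum, hcomb, ht⟩
    have h := hB p l (fun i => subset_closure (hp i)) hl hsum
    rw [hcomb] at h
    rw [ht]
    linarith only [h]
  -- g x itself is an element of Tset
  have hmem : g x ∈ Tset := by
    have hc : ((d:ℝ)+1) ≠ 0 := by positivity
    refine ⟨fun _ => x, fun _ => ((d:ℝ)+1)⁻¹, fun _ => hx, fun _ => by positivity, ?_, ?_, ?_⟩
    · simp only [Finset.sum_const, Finset.card_univ, Fintype.card_fin, nsmul_eq_mul,
        Nat.cast_add, Nat.cast_one]
      rw [mul_inv_cancel₀ hc]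
    · rw [← Finset.sum_smul]
      simp only [Finset.sum_const, Finset.card_univ, Fintype.card_fin, nsmul_eq_mul,
        Nat.cast_add, Nat.cast_one]
      rw [mul_inv_cancel₀ hc, one_smul]
    · rw [← Finset.sum_mul]
      simp only [Finset.sum_const, Finset.card_univ, Fintype.card_fin, nsmul_eq_mul,
        Nat.cast_add, Nat.cast_one]
      rw [mul_inv_cancel₀ hc, one_mul]
  have hTne : Tset.Nonempty := ⟨g x, hmem⟩
  have hTbdd : BddBelow Tset := ⟨g x - d * δ, hlb⟩
  have h1 : convEnv X g x ≤ g x := csInf_le hTbdd hmem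
  have h2 : g x - d * δ ≤ convEnv X g x := le_csInf hTne hlb
  rw [abs_le]
  constructor
  · have : (0:ℝ) ≤ (14 * d + 1) * L * ε := by positivity
    linarith only [h1, this]
  · have hdd : (d:ℝ) * δ ≤ (14 * d + 1) * L * ε := by
      rw [hδdef]
      have : (d:ℝ) * (14 * L * ε) = 14 * d * (L * ε) := by ring
      rw [this]
      nlinarith [hLε]
    linarith only [h2, hdd]

end
end

section
/- Let X be a bounded open convex subset of ℝ^d, let α : C(X) → [0,∞] be a function, and let M be an α-relaxation of the set L₂ of two-point convexity constraints. Then for every g ∈ C(X) with ℓ(g) ≤ 0 for all ℓ ∈ M, the convex envelope ḡ of g satisfies ‖g − ḡ‖_∞ ≤ d·α(g). -/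
open Set

noncomputable section

/-- The set `L₂` of two-point convexity constraints on `X`:
`ℓ(g) = g(λx + (1−λ)y) − λ g(x) − (1−λ) g(y)` with `x, y ∈ X` and `λ ∈ [0,1]`. -/
def Ltwo {d : ℕ} (X : Set (Esp d)) : Set ((Esp d → ℝ) → ℝ) :=
  {ℓ | ∃ x ∈ X, ∃ y ∈ X, ∃ l : ℝ, 0 ≤ l ∧ l ≤ 1 ∧
    ℓ = fun g => g (l • x + (1 - l) • y) - l * g x - (1 - l) * g y}

/-- `M` is an `α`-relaxation of `L`: for every `ℓ ∈ L` and every `g ∈ C(X)` there exists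
`ℓ_g ∈ M` with `|ℓ(g) − ℓ_g(g)| ≤ α(g)`. -/
def IsAlphaRelaxation {d : ℕ} (X : Set (Esp d)) (M L : Set ((Esp d → ℝ) → ℝ))
    (α : (Esp d → ℝ) → ENNReal) : Prop :=
  ∀ ℓ ∈ L, ∀ g : Esp d → ℝ, ContinuousOn g X →
    ∃ ℓ' ∈ M, ENNReal.ofReal |ℓ g - ℓ' g| ≤ α g

/-- Approximate Jensen inequality: if `g` is approximately convex (two-point convexity up
to an additive error `a ≥ 0`) on a convex set `X`, then for any convex combination of
`n + 1` points of `X` the Jensen inequality holds up to error `n * a`. -/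
lemma approx_jensen {d : ℕ} {X : Set (Esp d)} (hconv : Convex ℝ X)
    {g : Esp d → ℝ} {a : ℝ} (ha : 0 ≤ a)
    (h2 : ∀ x ∈ X, ∀ y ∈ X, ∀ l : ℝ, 0 ≤ l → l ≤ 1 →
      g (l • x + (1 - l) • y) ≤ l * g x + (1 - l) * g y + a) :
    ∀ (n : ℕ) (p : Fin (n + 1) → Esp d) (l : Fin (n + 1) → ℝ),
      (∀ i, p i ∈ X) → (∀ i, 0 ≤ l i) → (∑ i, l i) = 1 →
      g (∑ i, l i • p i) ≤ ∑ i, l i * g (p i) + n * a := by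
  intro n
  induction n with
  | zero =>
    intro p l hp hl hs
    rw [Fin.sum_univ_one] at hs
    simp [Fin.sum_univ_one, hs]
  | succ n ih =>
    intro p l hp hl hs
    set s : ℝ := ∑ i : Fin (n + 1), l i.castSucc with hsdef
    have hs' : s + l (Fin.last (n + 1)) = 1 := by
      rw [hsdef, ← Fin.sum_univ_castSucc]; exact hs
    have hs0 : 0 ≤ s := Finset.sum_nonneg fun i _ => hl _
    rcases eq_or_lt_of_le hs0 with h0 | hpos
    · -- all the first n+1 weights vanish
      have hz : ∀ i : Fin (n + 1), l i.castSucc = 0 := by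
        intro i
        exact (Finset.sum_eq_zero_iff_of_nonneg (fun i _ => hl _)).mp h0.symm i
          (Finset.mem_univ _)
      have hlast : l (Fin.last (n + 1)) = 1 := by
        have h0' : s = 0 := h0.symm
        linarith
      rw [Fin.sum_univ_castSucc (f := fun i => l i • p i),
        Fin.sum_univ_castSucc (f := fun i => l i * g (p i))]
      simp only [hz, zero_smul, Finset.sum_const_zero, zero_add, hlast, one_smul,
        zero_mul, one_mul]
      have hna : (0 : ℝ) ≤ (↑(n + 1)) * a := by positivity
      linarith
    · have hsne : s ≠ 0 := ne_of_gt hpos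
      set l' : Fin (n + 1) → ℝ := fun i => l i.castSucc / s with hl'def
      have hl' : ∀ i, 0 ≤ l' i := fun i => div_nonneg (hl _) hs0
      have hl's : ∑ i, l' i = 1 := by
        simp only [hl'def]
        rw [← Finset.sum_div, ← hsdef, div_self hsne]
      set y : Esp d := ∑ i, l' i • p i.castSucc with hydef
      have hy : y ∈ X := hconv.sum_mem (fun i _ => hl' i) hl's (fun i _ => hp _)
      have hiy := ih (fun i => p i.castSucc) l' (fun i => hp _) hl' hl's
      have h1l : 1 - l (Fin.last (n + 1)) = s := by linarith
      have hxeq : (∑ i, l i • p i) =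
          l (Fin.last (n + 1)) • p (Fin.last (n + 1)) + s • y := by
        rw [Fin.sum_univ_castSucc (f := fun i => l i • p i), add_comm]
        congr 1
        rw [hydef, Finset.smul_sum]
        refine Finset.sum_congr rfl fun i _ => ?_
        rw [smul_smul, hl'def]
        congr 1
        field_simp
      have hllast0 : 0 ≤ l (Fin.last (n + 1)) := hl _
      have hllast1 : l (Fin.last (n + 1)) ≤ 1 := by linarith
      have key := h2 (p (Fin.last (n + 1))) (hp _) y hy (l (Fin.last (n + 1))) hllast0 hllast1
      rw [h1l] at key
      have hmul : s * (∑ i, l' i * g (p i.castSucc)) =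
          ∑ i : Fin (n + 1), l i.castSucc * g (p i.castSucc) := by
        rw [Finset.mul_sum]
        refine Finset.sum_congr rfl fun i _ => ?_
        rw [hl'def]
        field_simp
      have hsy : s * g y ≤ (∑ i : Fin (n + 1), l i.castSucc * g (p i.castSucc)) + s * (n * a) := by
        calc s * g y ≤ s * ((∑ i, l' i * g (p i.castSucc)) + n * a) :=
              mul_le_mul_of_nonneg_left hiy hs0
          _ = _ := by rw [mul_add, hmul]
      have hsle1 : s ≤ 1 := by linarith
      have hsna : s * (n * a) ≤ n * a := by
        have hna : (0 : ℝ) ≤ (n : ℝ) * a := by positivity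
        nlinarith
      rw [hxeq, Fin.sum_univ_castSucc (f := fun i => l i * g (p i))]
      push_cast
      linarith

/-- Let `X ⊆ ℝ^d` be bounded, open and convex, `α : C(X) → [0,∞]`, and let
`M` be an `α`-relaxation of the set `L₂` of two-point convexity constraints.  Then for
every `g ∈ C(X)` with `ℓ(g) ≤ 0` for all `ℓ ∈ M`, the convex envelope `ḡ` of `g`
satisfies `‖g − ḡ‖_∞ ≤ d·α(g)`. -/
theorem stmt5 {d : ℕ} (X : Set (Esp d)) (hconv : Convex ℝ X) (hopen : IsOpen X)
    (hbdd : Bornology.IsBounded X) (α : (Esp d → ℝ) → ENNReal)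
    (M : Set ((Esp d → ℝ) → ℝ)) (hM : IsAlphaRelaxation X M (Ltwo X) α)
    (g : Esp d → ℝ) (hg : ContinuousOn g X) (hgM : ∀ ℓ ∈ M, ℓ g ≤ 0) :
    ∀ x ∈ X, ENNReal.ofReal |g x - convEnv X g x| ≤ (d : ENNReal) * α g := by
  intro x hx
  by_cases hfin : α g = ⊤
  · by_cases hd : d = 0
    · subst hd
      haveI : Subsingleton (Esp 0) :=
        ⟨fun a b => PiLp.ext fun i => i.elim0⟩
      have hset : {t : ℝ | ∃ (p : Fin (0 + 1) → Esp 0) (l : Fin (0 + 1) → ℝ),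
          (∀ i, p i ∈ X) ∧ (∀ i, 0 ≤ l i) ∧ (∑ i, l i) = 1 ∧ (∑ i, l i • p i) = x ∧
          t = ∑ i, l i * g (p i)} = {g x} := by
        ext t
        simp only [mem_setOf_eq, mem_singleton_iff]
        constructor
        · rintro ⟨p, l, hp, hl, hs1, hxe, rfl⟩
          rw [Fin.sum_univ_one] at hs1
          rw [Fin.sum_univ_one, hs1, one_mul, Subsingleton.elim (p 0) x]
        · rintro rfl
          exact ⟨fun _ => x, fun _ => 1, fun _ => hx, fun _ => zero_le_one,
            by simp, by simp, by simp⟩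
      have henv : convEnv X g x = g x := by
        rw [convEnv, hset, csInf_singleton]
      rw [henv]
      simp
    · rw [hfin, ENNReal.mul_top (by simpa using hd)]
      exact le_top
  · set a : ℝ := (α g).toReal with hadef
    have ha : 0 ≤ a := ENNReal.toReal_nonneg
    have h2 : ∀ u ∈ X, ∀ v ∈ X, ∀ l : ℝ, 0 ≤ l → l ≤ 1 →
        g (l • u + (1 - l) • v) ≤ l * g u + (1 - l) * g v + a := by
      intro u hu v hv l hl0 hl1
      have hL : (fun g : Esp d → ℝ =>
          g (l • u + (1 - l) • v) - l * g u - (1 - l) * g v) ∈ Ltwo X :=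
        ⟨u, hu, v, hv, l, hl0, hl1, rfl⟩
      obtain ⟨ℓ', hℓ'M, hb⟩ := hM _ hL g hg
      have h1 : ℓ' g ≤ 0 := hgM _ hℓ'M
      have habs : |g (l • u + (1 - l) • v) - l * g u - (1 - l) * g v - ℓ' g| ≤ a := by
        rw [hadef]
        exact (ENNReal.ofReal_le_iff_le_toReal hfin).mp hb
      have := (abs_le.mp habs).2
      linarith
    set S : Set ℝ := {t : ℝ | ∃ (p : Fin (d + 1) → Esp d) (l : Fin (d + 1) → ℝ),
        (∀ i, p i ∈ X) ∧ (∀ i, 0 ≤ l i) ∧ (∑ i, l i) = 1 ∧ (∑ i, l i • p i) = x ∧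
        t = ∑ i, l i * g (p i)} with hSdef
    have hsum1 : (∑ _i : Fin (d + 1), ((d : ℝ) + 1)⁻¹) = 1 := by
      rw [Finset.sum_const, Finset.card_fin, nsmul_eq_mul]
      push_cast
      rw [mul_inv_cancel₀ (by positivity)]
    have hmemS : g x ∈ S := by
      refine ⟨fun _ => x, fun _ => ((d : ℝ) + 1)⁻¹, fun _ => hx,
        fun _ => by positivity, hsum1, ?_, ?_⟩
      · rw [← Finset.sum_smul, hsum1, one_smul]
      · rw [← Finset.sum_mul, hsum1, one_mul]
    have hlb : ∀ t ∈ S, g x - d * a ≤ t := by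
      rintro t ⟨p, l, hp, hl, hs1, hxe, rfl⟩
      have := approx_jensen hconv ha h2 d p l hp hl hs1
      rw [hxe] at this
      linarith
    have hbddS : BddBelow S := ⟨g x - d * a, fun t ht => hlb t ht⟩
    have hle1 : convEnv X g x ≤ g x := csInf_le hbddS hmemS
    have hle2 : g x - d * a ≤ convEnv X g x := le_csInf ⟨g x, hmemS⟩ hlb
    have habs : |g x - convEnv X g x| ≤ (d : ℝ) * a := by
      rw [abs_of_nonneg (by linarith)]
      linarith
    calc ENNReal.ofReal |g x - convEnv X g x| ≤ ENNReal.ofReal ((d : ℝ) * a) :=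
          ENNReal.ofReal_le_ofReal habs
      _ = (d : ENNReal) * α g := by
          rw [ENNReal.ofReal_mul (by positivity), ENNReal.ofReal_natCast, hadef,
            ENNReal.ofReal_toReal hfin]

end
end

section
/- Let X be a bounded open convex subset of ℝ^d, let α : C(X) → [0,∞] be a function, let M be an α-relaxation of the set L₂ of two-point convexity constraints, and let g ∈ C(X) satisfy ℓ(g) ≤ 0 for all ℓ ∈ M. Then for every k ≥ 2, every choice of points x₁,…,x_k ∈ X and weights (λ₁,…,λ_k) in the simplex Δ^{k−1}, one has g(Σᵢ λᵢ xᵢ) − Σᵢ λᵢ g(xᵢ) ≤ k·α(g). -/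
open Set

noncomputable section

lemma key6 {d : ℕ} {X : Set (Esp d)} {α : (Esp d → ℝ) → ENNReal}
    {M : Set ((Esp d → ℝ) → ℝ)} (hM : IsAlphaRelaxation X M (Ltwo X) α)
    {g : Esp d → ℝ} (hg : ContinuousOn g X) (hgM : ∀ ℓ ∈ M, ℓ g ≤ 0)
    {x y : Esp d} (hx : x ∈ X) (hy : y ∈ X) {t : ℝ} (ht0 : 0 ≤ t) (ht1 : t ≤ 1) :
    ENNReal.ofReal (g (t • x + (1 - t) • y) - t * g x - (1 - t) * g y) ≤ α g := by
  obtain ⟨ℓ', hℓ'M, hle⟩ := hM _ ⟨x, hx, y, hy, t, ht0, ht1, rfl⟩ g hg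
  set a : ℝ := g (t • x + (1 - t) • y) - t * g x - (1 - t) * g y with ha
  refine le_trans ?_ hle
  apply ENNReal.ofReal_le_ofReal
  have := hgM ℓ' hℓ'M
  have : a ≤ a - ℓ' g := by linarith
  exact this.trans (le_abs_self _)

lemma main6 {d : ℕ} {X : Set (Esp d)} (hconv : Convex ℝ X)
    {α : (Esp d → ℝ) → ENNReal}
    {M : Set ((Esp d → ℝ) → ℝ)} (hM : IsAlphaRelaxation X M (Ltwo X) α)
    {g : Esp d → ℝ} (hg : ContinuousOn g X) (hgM : ∀ ℓ ∈ M, ℓ g ≤ 0) :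
    ∀ k : ℕ, ∀ p : Fin (k + 1) → Esp d, (∀ i, p i ∈ X) →
      ∀ l : Fin (k + 1) → ℝ, (∀ i, 0 ≤ l i) → (∑ i, l i) = 1 →
      ENNReal.ofReal (g (∑ i, l i • p i) - ∑ i, l i * g (p i)) ≤ (k : ENNReal) * α g := by
  intro k
  induction k with
  | zero =>
    intro p hp l hl0 hl1
    have h0 : l 0 = 1 := by simpa [Fin.sum_univ_succ] using hl1
    simp [Fin.sum_univ_succ, h0]
  | succ k ih =>
    intro p hp l hl0 hl1
    set s : ℝ := ∑ i : Fin (k + 1), l i.castSucc with hs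
    have hs0 : 0 ≤ s := Finset.sum_nonneg fun i _ => hl0 _
    have hlast : l (Fin.last (k + 1)) = 1 - s := by
      rw [Fin.sum_univ_castSucc] at hl1; linarith
    by_cases hsz : s = 0
    · -- all castSucc weights vanish
      have hz : ∀ i : Fin (k + 1), l i.castSucc = 0 := by
        intro i
        have := (Finset.sum_eq_zero_iff_of_nonneg (fun i _ => hl0 i.castSucc)).mp hsz.symm.symm
        exact (Finset.sum_eq_zero_iff_of_nonneg (fun i _ => hl0 i.castSucc)).mp hsz i (Finset.mem_univ i)
      rw [Fin.sum_univ_castSucc, Fin.sum_univ_castSucc (f := fun i => l i * g (p i))]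
      have h1 : l (Fin.last (k + 1)) = 1 := by rw [hlast, hsz]; ring
      rw [Finset.sum_eq_zero (fun i _ => by rw [hz i, zero_smul]),
          Finset.sum_eq_zero (fun i _ => by rw [hz i, zero_mul]), h1]
      simp
    · have hspos : 0 < s := lt_of_le_of_ne hs0 (Ne.symm hsz)
      have hs1 : s ≤ 1 := by
        have := hl0 (Fin.last (k + 1)); linarith [hlast]
      set l' : Fin (k + 1) → ℝ := fun i => l i.castSucc / s with hl'
      have hl'0 : ∀ i, 0 ≤ l' i := fun i => div_nonneg (hl0 _) hs0
      have hl'1 : (∑ i, l' i) = 1 := by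
        rw [hl', ← Finset.sum_div]; field_simp; exact hs.symm
      set q : Esp d := ∑ i, l' i • p i.castSucc with hq
      have hqX : q ∈ X := hconv.sum_mem (fun i _ => hl'0 i) hl'1 (fun i _ => hp _)
      have hsum : (∑ i, l i • p i) = s • q + (1 - s) • p (Fin.last (k + 1)) := by
        rw [Fin.sum_univ_castSucc, hlast, hq, Finset.smul_sum]
        congr 1
        apply Finset.sum_congr rfl
        intro i _
        rw [smul_smul, hl']
        congr 1
        field_simp
      have h2pt := key6 hM hg hgM hqX (hp (Fin.last (k + 1))) hs0 hs1
      have hih := ih (fun i => p i.castSucc) (fun i => hp _) l' hl'0 hl'1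
      have hsplit : g (∑ i, l i • p i) - ∑ i, l i * g (p i) =
          (g (s • q + (1 - s) • p (Fin.last (k + 1))) - s * g q
            - (1 - s) * g (p (Fin.last (k + 1))))
          + s * (g q - ∑ i, l' i * g (p i.castSucc)) := by
        rw [hsum, Fin.sum_univ_castSucc (f := fun i => l i * g (p i)), hlast]
        have : s * (∑ i, l' i * g (p i.castSucc)) = ∑ i : Fin (k+1), l i.castSucc * g (p i.castSucc) := by
          rw [Finset.mul_sum]
          apply Finset.sum_congr rfl
          intro i _
          rw [hl']; field_simp
        rw [mul_sub, this]; ring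
      rw [hsplit]
      calc ENNReal.ofReal _ ≤ ENNReal.ofReal (g (s • q + (1 - s) • p (Fin.last (k + 1)))
              - s * g q - (1 - s) * g (p (Fin.last (k + 1))))
            + ENNReal.ofReal (s * (g q - ∑ i, l' i * g (p i.castSucc))) :=
          ENNReal.ofReal_add_le
        _ ≤ α g + (k : ENNReal) * α g := by
            refine add_le_add h2pt ?_
            rw [ENNReal.ofReal_mul hs0]
            calc ENNReal.ofReal s * ENNReal.ofReal (g q - ∑ i, l' i * g (p i.castSucc))
                ≤ 1 * ((k : ENNReal) * α g) := by
                  refine mul_le_mul' ?_ hih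
                  exact ENNReal.ofReal_le_one.mpr hs1
              _ = (k : ENNReal) * α g := one_mul _
        _ = ((k + 1 : ℕ) : ENNReal) * α g := by push_cast; ring_nf

/-- Let `X ⊆ ℝ^d` be bounded, open and convex, `α : C(X) → [0,∞]`, let `M` be
an `α`-relaxation of `L₂`, and let `g ∈ C(X)` satisfy `ℓ(g) ≤ 0` for all `ℓ ∈ M`.  Then
for every `k ≥ 2`, points `x₁, …, x_k ∈ X` and weights `λ ∈ Δ^{k−1}`,
`g(∑ᵢ λᵢ xᵢ) − ∑ᵢ λᵢ g(xᵢ) ≤ k·α(g)`. -/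
theorem stmt6 {d : ℕ} (X : Set (Esp d)) (hconv : Convex ℝ X) (hopen : IsOpen X)
    (hbdd : Bornology.IsBounded X) (α : (Esp d → ℝ) → ENNReal)
    (M : Set ((Esp d → ℝ) → ℝ)) (hM : IsAlphaRelaxation X M (Ltwo X) α)
    (g : Esp d → ℝ) (hg : ContinuousOn g X) (hgM : ∀ ℓ ∈ M, ℓ g ≤ 0)
    (k : ℕ) (hk : 2 ≤ k) (p : Fin k → Esp d) (hp : ∀ i, p i ∈ X)
    (l : Fin k → ℝ) (hl0 : ∀ i, 0 ≤ l i) (hl1 : (∑ i, l i) = 1) :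
    ENNReal.ofReal (g (∑ i, l i • p i) - ∑ i, l i * g (p i)) ≤ (k : ENNReal) * α g := by
  obtain ⟨m, rfl⟩ : ∃ m, k = m + 1 := ⟨k - 1, by omega⟩
  calc ENNReal.ofReal _ ≤ (m : ENNReal) * α g :=
        main6 hconv hM hg hgM m p hp l hl0 hl1
    _ ≤ ((m + 1 : ℕ) : ENNReal) * α g := by
        refine mul_le_mul' ?_ le_rfl
        push_cast
        exact le_self_add


end
end

section
/- Let x, y, z, x', y', z' be points of ℝ^d with x ≠ y, x' ≠ y', z on the segment [x,y], z' on the segment [x',y'], and suppose ‖x − x'‖ ≤ η, ‖y − y'‖ ≤ η, ‖z − z'‖ ≤ η for some η ≥ 0. Let λ = ‖z−y‖/‖x−y‖ and λ' = ‖z'−y'‖/‖x'−y'‖. Then |λ − λ'| ≤ 4η/‖x−y‖. -/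
lemma seg_norm_le {d : ℕ} {x y z : EuclideanSpace ℝ (Fin d)}
    (hz : z ∈ segment ℝ x y) : ‖z - y‖ ≤ ‖x - y‖ := by
  obtain ⟨s, t, hs, ht, hst, rfl⟩ := hz
  have h : s • x + t • y - y = s • (x - y) := by
    have : t = 1 - s := by linarith
    subst this
    simp [smul_sub, sub_smul]
    abel
  rw [h, norm_smul, Real.norm_eq_abs, abs_of_nonneg hs]
  nlinarith [norm_nonneg (x - y)]

/-- Let `x, y, z, x', y', z'` be points of `ℝ^d` with `x ≠ y`, `x' ≠ y'`,
`z ∈ [x,y]`, `z' ∈ [x',y']`, and `‖x − x'‖ ≤ η`, `‖y − y'‖ ≤ η`, `‖z − z'‖ ≤ η` for some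
`η ≥ 0`.  With `λ = ‖z−y‖/‖x−y‖` and `λ' = ‖z'−y'‖/‖x'−y'‖`, one has
`|λ − λ'| ≤ 4η/‖x−y‖`. -/
theorem stmt8 {d : ℕ} (x y z x' y' z' : EuclideanSpace ℝ (Fin d)) (η : ℝ) (hη : 0 ≤ η)
    (hxy : x ≠ y) (hxy' : x' ≠ y')
    (hz : z ∈ segment ℝ x y) (hz' : z' ∈ segment ℝ x' y')
    (hxx : ‖x - x'‖ ≤ η) (hyy : ‖y - y'‖ ≤ η) (hzz : ‖z - z'‖ ≤ η) :
    |‖z - y‖ / ‖x - y‖ - ‖z' - y'‖ / ‖x' - y'‖| ≤ 4 * η / ‖x - y‖ := by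
  set a := ‖x - y‖ with ha_def
  set a' := ‖x' - y'‖ with ha'_def
  set b := ‖z - y‖ with hb_def
  set b' := ‖z' - y'‖ with hb'_def
  have ha : 0 < a := norm_pos_iff.mpr (sub_ne_zero.mpr hxy)
  have ha' : 0 < a' := norm_pos_iff.mpr (sub_ne_zero.mpr hxy')
  have hb0 : 0 ≤ b := norm_nonneg _
  have hb'0 : 0 ≤ b' := norm_nonneg _
  have hba : b ≤ a := seg_norm_le hz
  have hb'a' : b' ≤ a' := seg_norm_le hz'
  have haa : |a - a'| ≤ 2 * η := by
    calc |a - a'| ≤ ‖(x - y) - (x' - y')‖ := abs_norm_sub_norm_le _ _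
      _ = ‖(x - x') - (y - y')‖ := by congr 1; abel
      _ ≤ ‖x - x'‖ + ‖y - y'‖ := norm_sub_le _ _
      _ ≤ 2 * η := by linarith
  have hbb : |b - b'| ≤ 2 * η := by
    calc |b - b'| ≤ ‖(z - y) - (z' - y')‖ := abs_norm_sub_norm_le _ _
      _ = ‖(z - z') - (y - y')‖ := by congr 1; abel
      _ ≤ ‖z - z'‖ + ‖y - y'‖ := norm_sub_le _ _
      _ ≤ 2 * η := by linarith
  have key : |b * a' - b' * a| ≤ 4 * η * a' := by
    have : b * a' - b' * a = (b - b') * a' + b' * (a' - a) := by ring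
    rw [this]
    calc |(b - b') * a' + b' * (a' - a)| ≤ |(b - b') * a'| + |b' * (a' - a)| := abs_add_le _ _
      _ = |b - b'| * a' + b' * |a' - a| := by
          rw [abs_mul, abs_mul, abs_of_pos ha', abs_of_nonneg hb'0]
      _ ≤ 2 * η * a' + a' * (2 * η) := by
          have h1 : |a' - a| ≤ 2 * η := by rw [abs_sub_comm]; exact haa
          have h2 : b' * |a' - a| ≤ a' * (2 * η) := by nlinarith [abs_nonneg (a' - a)]
          nlinarith
      _ = 4 * η * a' := by ring
  have heq : b / a - b' / a' = (b * a' - b' * a) / (a * a') := by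
    field_simp
  rw [heq, abs_div, abs_of_pos (mul_pos ha ha')]
  rw [div_le_div_iff₀ (mul_pos ha ha') ha]
  nlinarith [key, ha.le, mul_le_mul_of_nonneg_right key ha.le]
end

section
/- There is a universal constant c > 0 with the following property. Let x, y, z be three points of the unit sphere S^{d−1} lying on a common great circle, with x and y not antipodal, z on the minimizing geodesic arc from x to y, and such that ‖x−z‖ ≥ ε/2 and ‖y−z‖ ≥ ε/2 for some ε > 0. Let z' be the radial projection of z on the segment [x,y], i.e. the point of [x,y] with z'/‖z'‖ = z. Then ‖z'‖ ≤ 1 − c ε². Consequently, the constant function s ≡ 1 on S^{d−1} satisfies ℓ_{xyz}(s) = ‖z'‖ − 1 ≤ −c ε², so every form ℓ in a spherical constraint set M_ε^s built from ε/2-sparse great-circle samples satisfies ℓ(s) ≤ −c ε². -/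
open Set

noncomputable section

/-- There is a universal constant `c > 0` such that: for any three points
`x, y, z` of the unit sphere `S^{d−1}` with `x, y` not antipodal, `z` on the minimizing
geodesic arc from `x` to `y` (i.e. the radial projection `z'` of `z` lies on the chord
`[x,y]`, `z' ≠ 0`, `z = z'/‖z'‖`), and `‖x−z‖ ≥ ε/2`, `‖y−z‖ ≥ ε/2` for some `ε > 0`,
one has `‖z'‖ ≤ 1 − c ε²`; consequently the constant function `s ≡ 1` satisfies
`ℓ_{xyz}(s) = ‖z'‖·1 − λ·1 − (1−λ)·1 = ‖z'‖ − 1 ≤ −c ε²` (with `λ = ‖z−y‖/‖x−y‖`),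
so every form of a spherical constraint set `M_ε^s` built from `ε/2`-sparse great-circle
samples satisfies `ℓ(s) ≤ −c ε²`. -/
theorem stmt14 : ∃ c : ℝ, 0 < c ∧ ∀ (d : ℕ) (x y z z' : Esp d) (ε : ℝ), 0 < ε →
    x ∈ Metric.sphere (0 : Esp d) 1 → y ∈ Metric.sphere (0 : Esp d) 1 →
    z ∈ Metric.sphere (0 : Esp d) 1 → x ≠ y → x ≠ -y →
    z' ∈ segment ℝ x y → z' ≠ 0 → z = ‖z'‖⁻¹ • z' →
    ε / 2 ≤ ‖x - z‖ → ε / 2 ≤ ‖y - z‖ →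
    ‖z'‖ ≤ 1 - c * ε ^ 2 ∧
      ‖z'‖ * (1 : ℝ) - (‖z - y‖ / ‖x - y‖) * (1 : ℝ) -
        (1 - ‖z - y‖ / ‖x - y‖) * (1 : ℝ) ≤ -(c * ε ^ 2) := by
  refine ⟨1/8, by norm_num, ?_⟩
  intro d x y z z' ε hε hx hy hz hxy hxny hseg hz'ne hzdef hxz hyz
  have hx1 : ‖x‖ = 1 := by simpa using hx
  have hy1 : ‖y‖ = 1 := by simpa using hy
  have hz1 : ‖z‖ = 1 := by simpa using hz
  have hz' : z' = ‖z'‖ • z := by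
    rw [hzdef, smul_smul, mul_inv_cancel₀ (norm_ne_zero_iff.2 hz'ne), one_smul]
  obtain ⟨a, b, ha, hb, hab, habz⟩ := hseg
  have hinner : (inner ℝ z z' : ℝ) = ‖z'‖ := by
    conv_lhs => rw [hz']
    rw [real_inner_smul_right, real_inner_self_eq_norm_sq, hz1]; ring
  have hzx : (inner ℝ z x : ℝ) ≤ 1 - ε ^ 2 / 8 := by
    have h : ‖x - z‖ ^ 2 = 2 - 2 * inner ℝ z x := by
      rw [norm_sub_sq_real, hx1, hz1, real_inner_comm]; ring
    nlinarith [norm_nonneg (x - z), hε.le]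
  have hzy : (inner ℝ z y : ℝ) ≤ 1 - ε ^ 2 / 8 := by
    have h : ‖y - z‖ ^ 2 = 2 - 2 * inner ℝ z y := by
      rw [norm_sub_sq_real, hy1, hz1, real_inner_comm]; ring
    nlinarith [norm_nonneg (y - z), hε.le]
  have hzz' : (inner ℝ z z' : ℝ) = a * inner ℝ z x + b * inner ℝ z y := by
    rw [← habz, inner_add_right, real_inner_smul_right, real_inner_smul_right]
  have hmain : ‖z'‖ ≤ 1 - 1/8 * ε ^ 2 := by
    rw [← hinner, hzz']
    nlinarith [mul_le_mul_of_nonneg_left hzx ha, mul_le_mul_of_nonneg_left hzy hb]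
  exact ⟨hmain, by linarith⟩

end
end
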